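/- arXiv:2003.05100 — 4 statements merged into one kernel-verified Lean document; each statement's English description precedes it below -/
import Mathlib

section
/- Let R be a Z/2-graded-commutative superalgebra over a commutative ring k, and let P be a Z/2-graded R-module that is finitely generated projective as an R-module. Then P is a generator of the category of R-modules if and only if P is faithful as an R-module. -/
/-- If finitely many elements of a module satisfy a "matrix" relation with coefficients in a
two-sided ideal of nilpotent elements, they all vanish. -/
lemma aux_nk {R M : Type*} [Ring R] [AddCommGroup M] [Module R M]
    (I : Ideal R) (hI2 : ∀ x ∈ I, ∀ r : R, x * r ∈ I) (hnil : ∀ x ∈ I, IsNilpotent x) :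
    ∀ (n : ℕ) (q : Fin n → M) (B : Fin n → Fin n → R),
      (∀ i j, B i j ∈ I) → (∀ i, q i = ∑ j, B i j • q j) → ∀ i, q i = 0 := by
  intro n
  induction n with
  | zero => intro q B hB hq i; exact absurd i.2 (by omega)
  | succ n ih =>
    intro q B hB hq
    set l := Fin.last n
    obtain ⟨w, hw⟩ := IsNilpotent.isUnit_one_sub (hnil _ (hB l l))
    have hlast : q l = ∑ j : Fin n, ((↑w⁻¹ : R) * B l j.castSucc) • q j.castSucc := by
      have h1 : (1 - B l l) • q l = ∑ j : Fin n, B l j.castSucc • q j.castSucc := by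
        rw [sub_smul, one_smul, sub_eq_iff_eq_add]
        simpa [Fin.sum_univ_castSucc] using hq l
      have h2 : (w : R) • q l = ∑ j : Fin n, B l j.castSucc • q j.castSucc := by
        rw [hw]; exact h1
      calc q l = ((↑w⁻¹ : R) * (w : R)) • q l := by
            rw [Units.inv_mul, one_smul]
        _ = (↑w⁻¹ : R) • ((w : R) • q l) := by rw [mul_smul]
        _ = (↑w⁻¹ : R) • ∑ j : Fin n, B l j.castSucc • q j.castSucc := by rw [h2]
        _ = ∑ j : Fin n, ((↑w⁻¹ : R) * B l j.castSucc) • q j.castSucc := by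
            rw [Finset.smul_sum]; simp [smul_smul]
    have key : ∀ i : Fin n, q i.castSucc = 0 := by
      refine ih (fun i => q i.castSucc)
        (fun i j => B i.castSucc j.castSucc
          + B i.castSucc l * ((↑w⁻¹ : R) * B l j.castSucc)) (fun i j => ?_) (fun i => ?_)
      · exact I.add_mem (hB _ _) (hI2 _ (hB i.castSucc l) _)
      · have h := hq i.castSucc
        rw [Fin.sum_univ_castSucc] at h
        show q i.castSucc = _
        rw [h, hlast, Finset.smul_sum]
        rw [← Finset.sum_add_distrib]
        refine Finset.sum_congr rfl fun j _ => ?_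
        simp only [add_smul, smul_smul]
        rfl
    have hlast0 : q l = 0 := by
      rw [hlast]
      simp only [key, smul_zero, Finset.sum_const_zero]
    intro i
    rcases Fin.eq_castSucc_or_eq_last i with ⟨j, rfl⟩ | rfl
    · exact key j
    · exact hlast0

section Graded

variable {k R : Type*} [CommRing k] [Ring R] [Algebra k R]
    (𝒜 : ZMod 2 → Submodule k R) [GradedAlgebra 𝒜]

lemma aux_decomp (r : R) :
    r = (DirectSum.decompose 𝒜 r 0 : R) + (DirectSum.decompose 𝒜 r 1 : R) := by
  classical
  have h := DirectSum.sum_support_decompose 𝒜 r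
  have hsub : DFinsupp.support (DirectSum.decompose 𝒜 r) ⊆ ({0, 1} : Finset (ZMod 2)) := by
    intro x _; fin_cases x
    · exact Finset.mem_insert_self _ _
    · exact Finset.mem_insert_of_mem (Finset.mem_singleton_self _)
  rw [Finset.sum_subset hsub (fun x _ hx => by
    simpa using (DFinsupp.notMem_support_iff.mp hx))] at h
  conv_lhs => rw [← h]
  rw [show ({0,1} : Finset (ZMod 2)) = insert 0 {1} from rfl]
  rw [Finset.sum_insert (by decide), Finset.sum_singleton]

lemma aux_anticomm (hodd : ∀ x ∈ 𝒜 1, x * x = 0)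
    {u v : R} (hu : u ∈ 𝒜 1) (hv : v ∈ 𝒜 1) : u * v = -(v * u) := by
  have h := hodd (u + v) (add_mem hu hv)
  rw [mul_add, add_mul, add_mul, hodd u hu, hodd v hv] at h
  have h2 : u * v + v * u = 0 := by
    rw [zero_add, add_zero] at h
    rw [add_comm] at h
    exact h
  exact eq_neg_of_add_eq_zero_left h2

/-- elements of the left ideal generated by the odd part are nilpotent -/
lemma aux_nilpotent (hcentral : ∀ x ∈ 𝒜 0, ∀ r : R, x * r = r * x)
    (hodd : ∀ x ∈ 𝒜 1, x * x = 0) :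
    ∀ x ∈ Submodule.span R (𝒜 1 : Set R), IsNilpotent x := by
  classical
  -- the k-span of products of two odd elements
  set Mset : Set R := {x | ∃ u ∈ 𝒜 1, ∃ v ∈ 𝒜 1, u * v = x} with hMset
  set M : Submodule k R := Submodule.span k Mset with hM
  have hgen_central : ∀ x ∈ Mset, ∀ r : R, x * r = r * x := by
    rintro x ⟨u, hu, v, hv, rfl⟩ r
    exact hcentral _ (by have h := SetLike.mul_mem_graded hu hv; rwa [show (1 : ZMod 2) + 1 = 0 by decide] at h) r
  have hM_central : ∀ x ∈ M, ∀ r : R, x * r = r * x := by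
    intro x hx
    refine Submodule.span_induction (fun y hy => hgen_central y hy) (by simp)
      (fun y z _ _ hy hz r => by rw [add_mul, mul_add, hy, hz]) ?_ hx
    intro a y _ hy r
    rw [smul_mul_assoc, mul_smul_comm, hy]
  have hM_nil : ∀ x ∈ M, IsNilpotent x := by
    intro x hx
    refine Submodule.span_induction (p := fun x _ => IsNilpotent x) ?_ (by simp) ?_ ?_ hx
    · rintro y ⟨u, hu, v, hv, rfl⟩
      refine ⟨2, ?_⟩
      have hvu : v * u = -(u * v) := aux_anticomm 𝒜 hodd hv hu
      have e1 : (u * v) ^ 2 = u * (v * u) * v := by noncomm_ring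
      have e2 : u * (u * v) * v = u * u * (v * v) := by noncomm_ring
      rw [e1, hvu, mul_neg, neg_mul, e2, hodd u hu, zero_mul, neg_zero]
    · intro y z hy' hz' hy hz
      exact Commute.isNilpotent_add (by
        exact (hM_central y hy' z).trans rfl) hy hz
    · intro a y _ hy
      exact hy.smul a
  -- membership invariant for the span of the odd part
  have main : ∀ x ∈ Submodule.span R (𝒜 1 : Set R),
      ∃ y ∈ 𝒜 1, ∃ z ∈ M, x = y + z := by
    intro x hx
    refine Submodule.span_induction ?_ ⟨0, zero_mem _, 0, zero_mem _, by simp⟩ ?_ ?_ hx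
    · intro y hy
      exact ⟨y, hy, 0, zero_mem _, by simp⟩
    · rintro y z _ _ ⟨y1, hy1, z1, hz1, rfl⟩ ⟨y2, hy2, z2, hz2, rfl⟩
      exact ⟨y1 + y2, add_mem hy1 hy2, z1 + z2, add_mem hz1 hz2, by abel⟩
    · rintro r x _ ⟨y, hy, z, hz, rfl⟩
      -- decompose r
      set r0 : R := (DirectSum.decompose 𝒜 r 0 : R) with hr0
      set r1 : R := (DirectSum.decompose 𝒜 r 1 : R) with hr1
      have hr0m : r0 ∈ 𝒜 0 := SetLike.coe_mem _
      have hr1m : r1 ∈ 𝒜 1 := SetLike.coe_mem _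
      have hrdec : r = r0 + r1 := aux_decomp 𝒜 r
      have h1 : r0 * y ∈ 𝒜 1 := by simpa using SetLike.mul_mem_graded hr0m hy
      have h2 : r1 * y ∈ M := Submodule.subset_span ⟨r1, hr1m, y, hy, rfl⟩
      have h3 : ∀ z ∈ M, r0 * z ∈ M := by
        intro z hz
        refine Submodule.span_induction ?_ (by simp) ?_ ?_ hz
        · rintro w ⟨u, hu, v, hv, rfl⟩
          rw [← mul_assoc]
          exact Submodule.subset_span ⟨r0 * u, by simpa using SetLike.mul_mem_graded hr0m hu,
            v, hv, rfl⟩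
        · intro a b _ _ ha hb; rw [mul_add]; exact add_mem ha hb
        · intro a b _ hb; rw [mul_smul_comm]; exact Submodule.smul_mem _ _ hb
      have h4 : ∀ z ∈ M, r1 * z ∈ 𝒜 1 := by
        intro z hz
        refine Submodule.span_induction ?_ (by simp) ?_ ?_ hz
        · rintro w hw
          rw [← hgen_central w hw r1]
          rcases hw with ⟨u, hu, v, hv, rfl⟩
          have : u * v ∈ 𝒜 0 := by have h := SetLike.mul_mem_graded hu hv; rwa [show (1 : ZMod 2) + 1 = 0 by decide] at h
          simpa using SetLike.mul_mem_graded this hr1m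
        · intro a b _ _ ha hb; rw [mul_add]; exact add_mem ha hb
        · intro a b _ hb; rw [mul_smul_comm]; exact Submodule.smul_mem _ _ hb
      refine ⟨r0 * y + r1 * z, add_mem h1 (h4 z hz), r1 * y + r0 * z, add_mem h2 (h3 z hz), ?_⟩
      rw [smul_eq_mul, hrdec]
      rw [add_mul, mul_add, mul_add]
      abel
  intro x hx
  obtain ⟨y, hy, z, hz, rfl⟩ := main x hx
  have hyn : IsNilpotent y := ⟨2, by rw [pow_two]; exact hodd y hy⟩
  exact Commute.isNilpotent_add ((hM_central z hz y).symm.trans rfl) hyn (hM_nil z hz)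

lemma aux_commutator (hcentral : ∀ x ∈ 𝒜 0, ∀ r : R, x * r = r * x) (x y : R) :
    x * y - y * x ∈ Submodule.span R ((𝒜 1 : Submodule k R) : Set R) := by
  have hx := aux_decomp 𝒜 x
  have hy := aux_decomp 𝒜 y
  set x0 : R := (DirectSum.decompose 𝒜 x 0 : R)
  set x1 : R := (DirectSum.decompose 𝒜 x 1 : R)
  set y0 : R := (DirectSum.decompose 𝒜 y 0 : R)
  set y1 : R := (DirectSum.decompose 𝒜 y 1 : R)
  have hx0 : x0 ∈ 𝒜 0 := SetLike.coe_mem _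
  have hy0 : y0 ∈ 𝒜 0 := SetLike.coe_mem _
  have hx1 : x1 ∈ 𝒜 1 := SetLike.coe_mem _
  have hy1 : y1 ∈ 𝒜 1 := SetLike.coe_mem _
  have e : x * y - y * x = x1 * y1 - y1 * x1 := by
    conv_lhs => rw [hx, hy]
    simp only [add_mul, mul_add]
    rw [hcentral _ hx0 y0, hcentral _ hx0 y1, ← hcentral _ hy0 x1]
    abel
  rw [e]
  have m1 : x1 * y1 ∈ Submodule.span R ((𝒜 1 : Submodule k R) : Set R) := by
    rw [show x1 * y1 = x1 • y1 from rfl]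
    exact Submodule.smul_mem _ _ (Submodule.subset_span hy1)
  have m2 : y1 * x1 ∈ Submodule.span R ((𝒜 1 : Submodule k R) : Set R) := by
    rw [show y1 * x1 = y1 • x1 from rfl]
    exact Submodule.smul_mem _ _ (Submodule.subset_span hx1)
  exact sub_mem m1 m2

lemma aux_twosided (hcentral : ∀ x ∈ 𝒜 0, ∀ r : R, x * r = r * x)
    (hodd : ∀ x ∈ 𝒜 1, x * x = 0) :
    ∀ x ∈ Submodule.span R ((𝒜 1 : Submodule k R) : Set R), ∀ r : R,
      x * r ∈ Submodule.span R ((𝒜 1 : Submodule k R) : Set R) := by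
  intro x hx
  refine Submodule.span_induction ?_ (by simp) ?_ ?_ hx
  · intro t ht r
    have hr := aux_decomp 𝒜 r
    set r0 : R := (DirectSum.decompose 𝒜 r 0 : R)
    set r1 : R := (DirectSum.decompose 𝒜 r 1 : R)
    have hr0 : r0 ∈ 𝒜 0 := SetLike.coe_mem _
    have hr1 : r1 ∈ 𝒜 1 := SetLike.coe_mem _
    have : t * r = r0 • t + -(r1 • t) := by
      conv_lhs => rw [hr]
      rw [mul_add, ← hcentral _ hr0 t, aux_anticomm 𝒜 hodd ht hr1]
      rfl
    rw [this]
    exact add_mem (Submodule.smul_mem _ _ (Submodule.subset_span ht))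
      (neg_mem (Submodule.smul_mem _ _ (Submodule.subset_span ht)))
  · intro a b _ _ ha hb r
    rw [add_mul]; exact add_mem (ha r) (hb r)
  · intro a b _ hb r
    rw [smul_mul_assoc]; exact Submodule.smul_mem _ _ (hb r)

end Graded

/-- Let `R` be a `ℤ/2`-graded-commutative superalgebra over a commutative ring `k`
(grading `𝒜` with `R₀` central and odd squares zero), and let `P` be a
`ℤ/2`-graded `R`-module (grading `ℳ`, an internal direct sum compatible with the
`R`-action) that is finitely generated projective as an `R`-module.  Then `P` is
a generator of the category of `R`-modules (i.e. its trace ideal is all of `R`)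
if and only if `P` is faithful as an `R`-module. -/
theorem stmt1 {k R : Type*} [CommRing k] [Ring R] [Algebra k R]
    (𝒜 : ZMod 2 → Submodule k R) [GradedAlgebra 𝒜]
    (hcentral : ∀ x ∈ 𝒜 0, ∀ r : R, x * r = r * x)
    (hodd : ∀ x ∈ 𝒜 1, x * x = 0)
    {P : Type*} [AddCommGroup P] [Module R P]
    (ℳ : ZMod 2 → AddSubgroup P)
    (hinternal : DirectSum.IsInternal ℳ)
    (hsmul : ∀ (i j : ZMod 2), ∀ r ∈ 𝒜 i, ∀ m ∈ ℳ j, r • m ∈ ℳ (i + j))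
    [Module.Finite R P] [Module.Projective R P] :
    (Submodule.span R {x : R | ∃ (f : P →ₗ[R] R) (p : P), f p = x} = ⊤)
      ↔ (∀ r : R, (∀ m : P, r • m = 0) → r = 0) := by
  classical
  -- the trace ideal
  set S : Set R := {x : R | ∃ (f : P →ₗ[R] R) (p : P), f p = x} with hS
  set T : Ideal R := Submodule.span R S with hT
  -- dual basis
  obtain ⟨n, v, hv⟩ := Module.Finite.exists_fin (R := R) (M := P)
  have hsurj : Function.Surjective (Fintype.linearCombination R v) := by
    intro p
    have : p ∈ Submodule.span R (Set.range v) := hv ▸ Submodule.mem_top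
    obtain ⟨c, hc⟩ := (Submodule.mem_span_range_iff_exists_fun R).mp this
    exact ⟨c, by rw [Fintype.linearCombination_apply]; exact hc⟩
  obtain ⟨σ, hσ⟩ := Module.projective_lifting_property
    (Fintype.linearCombination R v) (LinearMap.id) hsurj
  set f : Fin n → (P →ₗ[R] R) := fun i => (LinearMap.proj i).comp σ with hf
  have hdb : ∀ p : P, ∑ i, f i p • v i = p := by
    intro p
    have := congrArg (fun g : P →ₗ[R] P => g p) hσ
    simpa [Fintype.linearCombination_apply, hf] using this
  have hfS : ∀ (g : P →ₗ[R] R) (p : P), g p ∈ T :=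
    fun g p => Submodule.subset_span ⟨g, p, rfl⟩
  constructor
  · -- generator → faithful
    intro hgen r hr
    have key : ∀ x ∈ T, ∀ s : R, r * (s * x) = 0 := by
      intro x hx
      refine Submodule.span_induction ?_ (by simp) ?_ ?_ hx
      · rintro x ⟨g, p, rfl⟩ s
        have e : r * (s * g p) = g (r • s • p) := by
          rw [map_smul, map_smul]; rfl
        rw [e, hr (s • p), map_zero]
      · intro a b _ _ ha hb s
        rw [mul_add, mul_add, ha, hb, add_zero]
      · intro a x _ hx' s
        have e : r * (s * (a • x)) = r * ((s * a) * x) := by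
          rw [smul_eq_mul, mul_assoc]
        rw [e, hx' (s * a)]
    have h1 : (1 : R) ∈ T := hgen ▸ Submodule.mem_top
    have := key 1 h1 1
    simpa using this

  · -- faithful → generator
    intro hfaith
    set I : Ideal R := Submodule.span R ((𝒜 1 : Submodule k R) : Set R) with hIdef
    have hI2 : ∀ x ∈ I, ∀ r : R, x * r ∈ I := aux_twosided 𝒜 hcentral hodd
    have hnil : ∀ x ∈ I, IsNilpotent x := aux_nilpotent 𝒜 hcentral hodd
    have hcommI : ∀ x y : R, x * y - y * x ∈ I := aux_commutator 𝒜 hcentral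
    -- the quotient by the two-sided ideal generated by the odd part
    let J : TwoSidedIdeal R := TwoSidedIdeal.mk' (I : Set R) I.zero_mem
      (fun hx hy => I.add_mem hx hy) (fun hx => I.neg_mem hx)
      (fun {x y} hy => I.smul_mem x hy)
      (fun {x y} hx => hI2 _ hx y)
    let c : RingCon R := J.ringCon
    have hc : ∀ a b : R, c a b ↔ a - b ∈ I := fun a b => by
      rw [show c a b ↔ J.ringCon a b from Iff.rfl, J.rel_iff a b]
      exact TwoSidedIdeal.mem_mk' (I : Set R) _ _ _ _ _ (a - b)
    letI : CommRing c.Quotient := { (inferInstance : Ring c.Quotient) with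
      mul_comm := by
        rintro ⟨x⟩ ⟨y⟩
        show ((x : R) : c.Quotient) * ((y : R) : c.Quotient)
          = ((y : R) : c.Quotient) * ((x : R) : c.Quotient)
        rw [← RingCon.coe_mul, ← RingCon.coe_mul, RingCon.eq]
        exact (hc _ _).mpr (hcommI x y) }
    let π : R →+* c.Quotient := c.mk'
    have hπ : ∀ x : R, π x = (x : c.Quotient) := fun _ => rfl
    have hπsurj : Function.Surjective π := fun q => Quot.inductionOn q fun x => ⟨x, rfl⟩
    have hker : ∀ x : R, π x = 0 ↔ x ∈ I := by
      intro x
      rw [hπ, show (0 : c.Quotient) = ((0 : R) : c.Quotient) from rfl, RingCon.eq, hc]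
      simp
    -- the image of the trace ideal
    let Tbar : Ideal c.Quotient :=
      { carrier := π '' (T : Set R)
        add_mem' := by
          rintro a b ⟨x, hx, rfl⟩ ⟨y, hy, rfl⟩
          exact ⟨x + y, T.add_mem hx hy, map_add π x y⟩
        zero_mem' := ⟨0, T.zero_mem, map_zero π⟩
        smul_mem' := by
          rintro q x ⟨t, ht, rfl⟩
          obtain ⟨r, rfl⟩ := hπsurj q
          exact ⟨r * t, T.smul_mem r ht, map_mul π r t⟩ }
    have hTbar_mem : ∀ t ∈ T, π t ∈ Tbar := fun t ht => ⟨t, ht, rfl⟩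
    -- the two key dual-basis identities
    have key1 : ∀ (g : P →ₗ[R] R) (p : P), g p = ∑ j, f j p * g (v j) := by
      intro g p
      conv_lhs => rw [← hdb p]
      rw [map_sum]
      exact Finset.sum_congr rfl fun j _ => by rw [map_smul, smul_eq_mul]
    have key2 : ∀ (g : P →ₗ[R] R) (p : P),
        g p = ∑ j, ∑ i, f j p * (f i (v j) * g (v i)) := by
      intro g p
      conv_lhs => rw [key1 g p]
      refine Finset.sum_congr rfl fun j _ => ?_
      conv_lhs => rw [key1 g (v j)]
      rw [Finset.mul_sum]
    -- Tbar is finitely generated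
    have hTbar_span : Tbar = Submodule.span c.Quotient
        (π '' (Set.range fun ij : Fin n × Fin n => f ij.1 (v ij.2))) := by
      apply le_antisymm
      · rintro x ⟨t, ht, rfl⟩
        refine Submodule.span_induction (p := fun t _ => π t ∈ Submodule.span c.Quotient
          (π '' (Set.range fun ij : Fin n × Fin n => f ij.1 (v ij.2)))) ?_ (by simp) ?_ ?_ ht
        · rintro x ⟨g, p, rfl⟩
          rw [key2 g p, map_sum]
          refine Submodule.sum_mem _ fun j _ => ?_
          rw [map_sum]
          refine Submodule.sum_mem _ fun i _ => ?_
          rw [map_mul, map_mul]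
          have : π (f j p) * (π (f i (v j)) * π (g (v i)))
              = (π (f j p) * π (g (v i))) • π (f i (v j)) := by
            rw [smul_eq_mul]; ring
          rw [this]
          exact Submodule.smul_mem _ _
            (Submodule.subset_span ⟨f i (v j), ⟨(i, j), rfl⟩, rfl⟩)
        · intro a b _ _ ha hb
          rw [map_add]; exact add_mem ha hb
        · intro r t _ ht'
          rw [show r • t = r * t from rfl, map_mul]
          exact Submodule.smul_mem _ _ ht'
      · rw [Submodule.span_le]
        rintro x ⟨y, ⟨ij, rfl⟩, rfl⟩
        exact hTbar_mem _ (hfS (f ij.1) (v ij.2))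
    have hTbar_fg : Tbar.FG := by
      rw [hTbar_span]
      exact Submodule.fg_span ((Set.finite_range _).image _)
    -- Tbar is idempotent
    have hTbar_le : Tbar ≤ Tbar • Tbar := by
      rintro x ⟨t, ht, rfl⟩
      refine Submodule.span_induction (p := fun t _ => π t ∈ Tbar • Tbar)
        ?_ (by simp) ?_ ?_ ht
      · rintro x ⟨g, p, rfl⟩
        rw [key1 g p, map_sum]
        refine Submodule.sum_mem _ fun j _ => ?_
        rw [map_mul]
        exact Submodule.smul_mem_smul (hTbar_mem _ (hfS (f j) p))
          (hTbar_mem _ (hfS g (v j)))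
      · intro a b _ _ ha hb
        rw [map_add]; exact add_mem ha hb
      · intro r t _ ht'
        rw [show r • t = r * t from rfl, map_mul, ← smul_eq_mul]
        exact Submodule.smul_mem _ _ ht'
    -- Nakayama in the commutative quotient
    obtain ⟨ebar, hebarT, hebar⟩ :=
      Submodule.exists_mem_and_smul_eq_self_of_fg_of_le_smul Tbar Tbar hTbar_fg hTbar_le
    have hebarT' : ebar ∈ Tbar := hebarT
    obtain ⟨a, haT, hπa⟩ := hebarT'
    have hebarT' : ebar ∈ Tbar := ⟨a, haT, hπa⟩
    -- an even (hence central) representative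
    set a0 : R := (DirectSum.decompose 𝒜 a 0 : R) with ha0def
    have ha0c : a0 ∈ Subring.center R :=
      Subring.mem_center_iff.2 fun g => (hcentral _ (SetLike.coe_mem _) g).symm
    have hπa0 : π a0 = ebar := by
      have h1 : a - a0 ∈ I := by
        have : a - a0 = (DirectSum.decompose 𝒜 a 1 : R) := by
          conv_lhs => rw [aux_decomp 𝒜 a]
          abel
        rw [this]
        exact Submodule.subset_span (SetLike.coe_mem _)
      have h2 : π (a - a0) = 0 := (hker _).2 h1
      rw [map_sub] at h2
      rw [← hπa]
      exact (sub_eq_zero.mp h2).symm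
    -- lift to a central idempotent
    let φ : Subring.center R →+* c.Quotient := π.comp (Subring.center R).subtype
    have hkerφ : ∀ x ∈ RingHom.ker φ, IsNilpotent x := by
      intro x hx
      have hx' : π (x : R) = 0 := hx
      obtain ⟨m, hm⟩ := hnil _ ((hker _).1 hx')
      exact ⟨m, by
        apply Subtype.ext
        push_cast
        exact hm⟩
    have hrange : ebar ∈ φ.range := ⟨⟨a0, ha0c⟩, hπa0⟩
    have hebar_idem : IsIdempotentElem ebar := by
      have := hebar ebar hebarT'
      rwa [smul_eq_mul] at this
    obtain ⟨e', he'i, he'⟩ :=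
      exists_isIdempotentElem_eq_of_ker_isNilpotent φ hkerφ ebar hrange hebar_idem
    set e : R := (e' : R) with hedef
    have he_c : ∀ g : R, g * e = e * g := fun g => Subring.mem_center_iff.1 e'.2 g
    have he_idem : e * e = e := by
      have := congrArg (Subtype.val : Subring.center R → R) he'i
      push_cast at this
      exact this
    have hπe : π e = ebar := he'
    -- (1 - e) multiplied by the trace ideal lands in I
    have hET : ∀ t ∈ T, (1 - e) * t ∈ I := by
      intro t ht
      refine (hker _).1 ?_
      rw [map_mul, map_sub, map_one, hπe, sub_mul, one_mul]
      have := hebar (π t) (hTbar_mem t ht)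
      rw [smul_eq_mul] at this
      rw [this, sub_self]
    -- key identity
    have hkey : ∀ p : P, (1 - e) • p = ∑ j, ((1 - e) * f j p) • ((1 - e) • v j) := by
      intro p
      have lhs : (1 - e) • p = ∑ j, ((1 - e) * f j p) • v j := by
        conv_lhs => rw [← hdb p]
        rw [Finset.smul_sum]
        exact Finset.sum_congr rfl fun j _ => by rw [smul_smul]
      have term : ∀ j : Fin n, ((1 - e) * f j p) • ((1 - e) • v j)
          = ((1 - e) * f j p) • v j := by
        intro j
        rw [smul_smul]
        congr 1
        have hc1 : f j p * (1 - e) = (1 - e) * f j p := by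
          rw [mul_sub, sub_mul, mul_one, one_mul, he_c (f j p)]
        rw [mul_assoc, hc1, ← mul_assoc]
        congr 1
        calc (1 - e) * (1 - e) = (1 - e) - e * (1 - e) := by rw [sub_mul, one_mul]
          _ = (1 - e) - (e - e * e) := by rw [mul_sub, mul_one]
          _ = (1 - e) - (e - e) := by rw [he_idem]
          _ = 1 - e := by abel
      rw [lhs]
      exact Finset.sum_congr rfl fun j _ => (term j).symm
    -- the nilpotent-Nakayama argument kills (1-e)•P
    have hvzero : ∀ i : Fin n, (1 - e) • v i = 0 := by
      refine aux_nk I hI2 hnil n (fun i => (1 - e) • v i)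
        (fun i j => (1 - e) * f j (v i)) (fun i j => hET _ (hfS (f j) (v i)))
        (fun i => hkey (v i))
    have hann : ∀ p : P, (1 - e) • p = 0 := by
      intro p
      rw [hkey p]
      simp only [hvzero, smul_zero, Finset.sum_const_zero]
    -- faithfulness gives e = 1
    have he1 : (1 : R) - e = 0 := hfaith _ hann
    -- hence π a = π 1, so 1 - a is nilpotent and a is a unit in T
    have hπa1 : π ((1 : R) - a) = 0 := by
      have he1' : e = 1 := by
        have := sub_eq_zero.mp he1
        exact this.symm
      rw [map_sub, hπa, ← hπe, he1', map_one, sub_self]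
    have h1a : (1 : R) - a ∈ I := (hker _).1 hπa1
    have : IsUnit a := by
      have := IsNilpotent.isUnit_one_sub (hnil _ h1a)
      rwa [sub_sub_cancel] at this
    exact Ideal.eq_top_of_isUnit_mem T haT this
end

section
/- Let A be a Hopf superalgebra over a field k and let := A ⋊ kZ₂ be its bosonization (Radford biproduct with the group algebra of Z₂ = ⟨σ⟩ acting by parity). Then there is a natural k-linear isomorphism between the space of right A-supercomodule maps A → k and the space of right Â-comodule maps Â → k, given by ψ ↦ ψ ⊗ ω where ω(σ^i) = δ_{i,0}. -/
open TensorProduct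

/-- A (not necessarily super-commutative) Hopf superalgebra over `k`:
a `ℤ/2`-graded `k`-module (the grading being given by the pair of projections
`p 0`, `p 1`), equipped with a graded multiplication `mul`, unit `one`, graded
comultiplication `comul`, counit `counit` and antipode `antipode`, where the
compatibility of `comul` with `mul` involves the super-sign
`(a ⊗ b)(c ⊗ d) = (−1)^{|b||c|} ac ⊗ bd`. -/
structure HopfSuperalgebra (k : Type*) [CommRing k] (A : Type*)
    [AddCommGroup A] [Module k A] where
  p : ZMod 2 → A →ₗ[k] A
  p_sum : p 0 + p 1 = LinearMap.id
  p_orth : ∀ i j : ZMod 2, i ≠ j → (p i) ∘ₗ (p j) = 0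
  mul : A →ₗ[k] A →ₗ[k] A
  one : A
  mul_assoc : ∀ a b c : A, mul (mul a b) c = mul a (mul b c)
  one_mul : ∀ a : A, mul one a = a
  mul_one : ∀ a : A, mul a one = a
  mul_grading : ∀ (i j : ZMod 2) (a b : A),
    p (i + j) (mul (p i a) (p j b)) = mul (p i a) (p j b)
  one_grading : p 0 one = one
  comul : A →ₗ[k] A ⊗[k] A
  counit : A →ₗ[k] k
  coassoc : ∀ a : A,
    (TensorProduct.assoc k A A A)
      ((TensorProduct.map comul (LinearMap.id : A →ₗ[k] A)) (comul a)) =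
    (TensorProduct.map (LinearMap.id : A →ₗ[k] A) comul) (comul a)
  counit_comul : ∀ a : A,
    (TensorProduct.lid k A)
      ((TensorProduct.map counit (LinearMap.id : A →ₗ[k] A)) (comul a)) = a
  comul_counit : ∀ a : A,
    (TensorProduct.rid k A)
      ((TensorProduct.map (LinearMap.id : A →ₗ[k] A) counit) (comul a)) = a
  comul_grading : ∀ l : ZMod 2,
    comul ∘ₗ p l = ∑ i : ZMod 2, (TensorProduct.map (p i) (p (l - i))) ∘ₗ comul
  comul_one : comul one = one ⊗ₜ[k] one
  counit_one : counit one = 1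
  counit_mul : ∀ a b : A, counit (mul a b) = counit a * counit b
  counit_grading : counit ∘ₗ p 1 = 0
  comul_mul : ∀ a b : A, comul (mul a b) =
    ∑ i : ZMod 2, ∑ j : ZMod 2, ((-1 : ℤ) ^ (i.val * j.val)) •
      (TensorProduct.homTensorHomMap (RingHom.id k) A A A A
        ((TensorProduct.map mul mul)
          ((TensorProduct.map (LinearMap.id : A →ₗ[k] A) (p i)) (comul a))))
        ((TensorProduct.map (p j) (LinearMap.id : A →ₗ[k] A)) (comul b))
  antipode : A →ₗ[k] A
  antipode_left : ∀ a : A,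
    (TensorProduct.lift mul)
      ((TensorProduct.map antipode (LinearMap.id : A →ₗ[k] A)) (comul a))
      = counit a • one
  antipode_right : ∀ a : A,
    (TensorProduct.lift mul)
      ((TensorProduct.map (LinearMap.id : A →ₗ[k] A) antipode) (comul a))
      = counit a • one

namespace HopfSuperalgebra

variable {k A : Type*} [CommRing k] [AddCommGroup A] [Module k A]

/-- Super-commutativity: for homogeneous `a`, `b` one has
`ab = (−1)^{|a||b|} ba` (which, in the presence of the grading axioms, is
equivalent to `R₀` being central and odd squares vanishing). -/
def IsSupercommutative (H : HopfSuperalgebra k A) : Prop :=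
  ∀ (i j : ZMod 2) (a b : A),
    H.mul (H.p i a) (H.p j b) =
      ((-1 : ℤ) ^ (i.val * j.val)) • H.mul (H.p j b) (H.p i a)

/-- The convolution product `ξ * η` on the dual space `A* = Hom_k(A, k)`. -/
noncomputable def conv (H : HopfSuperalgebra k A) (ξ η : A →ₗ[k] k) :
    A →ₗ[k] k :=
  (LinearMap.mul' k k) ∘ₗ (TensorProduct.map ξ η) ∘ₗ H.comul

/-- `φ` is a left integral: `ξ φ = ξ(1) φ` for all `ξ ∈ A*`. -/
def IsLeftIntegral (H : HopfSuperalgebra k A) (φ : A →ₗ[k] k) : Prop :=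
  ∀ ξ : A →ₗ[k] k, H.conv ξ φ = ξ H.one • φ

/-- `φ` is a right integral: `φ ξ = ξ(1) φ` for all `ξ ∈ A*`. -/
def IsRightIntegral (H : HopfSuperalgebra k A) (φ : A →ₗ[k] k) : Prop :=
  ∀ ξ : A →ₗ[k] k, H.conv φ ξ = ξ H.one • φ

end HopfSuperalgebra

namespace HopfSuperalgebra

variable {k A : Type*} [CommRing k] [AddCommGroup A] [Module k A]

/-- The bosonization `Â = A ⊗ kZ₂` is modelled on `A × A`, the first component
being the coefficient of `σ⁰ = e` and the second that of `σ`.  `slot i` embeds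
`A` as `A ⊗ σ^i`. -/
def slot (k : Type*) [CommRing k] (A : Type*) [AddCommGroup A] [Module k A]
    (i : ZMod 2) : A →ₗ[k] A × A :=
  if i = 0 then LinearMap.inl k A A else LinearMap.inr k A A

/-- The smash-coproduct comultiplication of the bosonization `Â = A ⊗ kZ₂`,
`Δ(a ⊗ σ^i) = Σ (a₍₁₎ ⊗ σ^{i+|a₍₂₎|}) ⊗ (a₍₂₎ ⊗ σ^i)`. -/
noncomputable def hatComul (H : HopfSuperalgebra k A) :
    (A × A) →ₗ[k] (A × A) ⊗[k] (A × A) :=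
  (∑ j : ZMod 2,
      (TensorProduct.map (slot k A ((0 : ZMod 2) + j))
        ((slot k A 0) ∘ₗ H.p j)) ∘ₗ H.comul) ∘ₗ LinearMap.fst k A A
  + (∑ j : ZMod 2,
      (TensorProduct.map (slot k A ((1 : ZMod 2) + j))
        ((slot k A 1) ∘ₗ H.p j)) ∘ₗ H.comul) ∘ₗ LinearMap.snd k A A

/-- The unit `1 ⊗ e` of the bosonization. -/
def hatOne (H : HopfSuperalgebra k A) : A × A := (H.one, 0)

/-- `φ : Â → k` is a map of right `Â`-comodules (where `k` is the trivial
comodule), i.e. `Σ φ(x₍₁₎) x₍₂₎ = φ(x) 1` for all `x ∈ Â`. -/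
def IsHatComoduleMap (H : HopfSuperalgebra k A) (φ : A × A →ₗ[k] k) : Prop :=
  ∀ x : A × A,
    (TensorProduct.lid k (A × A))
      ((TensorProduct.map φ (LinearMap.id : A × A →ₗ[k] A × A))
        (H.hatComul x)) = φ x • H.hatOne

/-- `ψ : A → k` is a map of right `A`-supercomodules (`k` trivial), i.e.
`Σ ψ(a₍₁₎) a₍₂₎ = ψ(a) 1` for all `a ∈ A`. -/
def IsComoduleMap (H : HopfSuperalgebra k A) (ψ : A →ₗ[k] k) : Prop :=
  ∀ a : A,
    (TensorProduct.lid k A)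
      ((TensorProduct.map ψ (LinearMap.id : A →ₗ[k] A)) (H.comul a))
      = ψ a • H.one

end HopfSuperalgebra

namespace HopfSuperalgebra

variable {k A : Type*} [CommRing k] [AddCommGroup A] [Module k A]

lemma slot_zero : slot k A 0 = LinearMap.inl k A A := if_pos rfl

lemma slot_one : slot k A 1 = LinearMap.inr k A A := if_neg (by decide)

/-- `L ξ a = Σ ξ(a₍₁₎) a₍₂₎`. -/
noncomputable def L (H : HopfSuperalgebra k A) (ξ : A →ₗ[k] k) : A →ₗ[k] A :=
  (TensorProduct.lid k A).toLinearMap ∘ₗ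
    TensorProduct.map ξ (LinearMap.id : A →ₗ[k] A) ∘ₗ H.comul

lemma L_apply (H : HopfSuperalgebra k A) (ξ : A →ₗ[k] k) (a : A) :
    H.L ξ a = (TensorProduct.lid k A)
      ((TensorProduct.map ξ (LinearMap.id : A →ₗ[k] A)) (H.comul a)) := rfl

lemma isComoduleMap_iff (H : HopfSuperalgebra k A) (ψ : A →ₗ[k] k) :
    H.IsComoduleMap ψ ↔ ∀ a : A, H.L ψ a = ψ a • H.one := Iff.rfl

lemma zmodsum {M : Type*} [AddCommMonoid M] (f : ZMod 2 → M) :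
    ∑ i : ZMod 2, f i = f 0 + f 1 := by
  have h : (Finset.univ : Finset (ZMod 2)) = {0, 1} := by decide
  rw [h, Finset.sum_insert (by decide), Finset.sum_singleton]

lemma aux1 (φ : A × A →ₗ[k] k) (f g : A →ₗ[k] A × A)
    (q : A →ₗ[k] A) (t : A ⊗[k] A) :
    (TensorProduct.lid k (A × A))
      ((TensorProduct.map φ (LinearMap.id : A × A →ₗ[k] A × A))
        ((TensorProduct.map f (g ∘ₗ q)) t))
    = g (q ((TensorProduct.lid k A)
        ((TensorProduct.map (φ ∘ₗ f) (LinearMap.id : A →ₗ[k] A)) t))) := by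
  induction t using TensorProduct.induction_on with
  | zero => simp
  | tmul a b => simp
  | add x y hx hy => simp [hx, hy]

lemma hatG (H : HopfSuperalgebra k A) (φ : A × A →ₗ[k] k) (x : A × A) :
    (TensorProduct.lid k (A × A))
      ((TensorProduct.map φ (LinearMap.id : A × A →ₗ[k] A × A))
        (H.hatComul x))
    = (H.p 0 (H.L (φ ∘ₗ LinearMap.inl k A A) x.1)
        + H.p 1 (H.L (φ ∘ₗ LinearMap.inr k A A) x.1),
       H.p 0 (H.L (φ ∘ₗ LinearMap.inr k A A) x.2)
        + H.p 1 (H.L (φ ∘ₗ LinearMap.inl k A A) x.2)) := by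
  have h00 : ((0 : ZMod 2) + 0) = 0 := by decide
  have h01 : ((0 : ZMod 2) + 1) = 1 := by decide
  have h10 : ((1 : ZMod 2) + 0) = 1 := by decide
  have h11 : ((1 : ZMod 2) + 1) = 0 := by decide
  unfold hatComul
  simp only [LinearMap.add_apply, LinearMap.comp_apply, LinearMap.sum_apply,
    zmodsum, h00, h01, h10, h11, slot_zero, slot_one, map_add,
    LinearMap.fst_apply, LinearMap.snd_apply, aux1, L_apply,
    LinearMap.inl_apply, LinearMap.inr_apply, Prod.mk_add_mk, add_zero,
    zero_add]

lemma p_one_one (H : HopfSuperalgebra k A) : H.p 1 H.one = 0 := by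
  have h := LinearMap.congr_fun H.p_sum H.one
  simp only [LinearMap.add_apply, LinearMap.id_apply, H.one_grading] at h
  linear_combination (norm := module) h

lemma fwd (H : HopfSuperalgebra k A) (ψ : A →ₗ[k] k)
    (hψ : H.IsComoduleMap ψ) :
    H.IsHatComoduleMap (ψ ∘ₗ LinearMap.fst k A A) := by
  have h0 : (ψ ∘ₗ LinearMap.fst k A A) ∘ₗ LinearMap.inl k A A = ψ := by
    ext a; simp
  have h1 : (ψ ∘ₗ LinearMap.fst k A A) ∘ₗ LinearMap.inr k A A = 0 := by
    ext a; simp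
  intro x
  rw [hatG, h0, h1]
  have hL0 : H.L (0 : A →ₗ[k] k) = 0 := by
    unfold L; rw [TensorProduct.map_zero_left]; ext a; simp
  rw [hL0]
  rw [(H.isComoduleMap_iff ψ).mp hψ x.1, (H.isComoduleMap_iff ψ).mp hψ x.2]
  simp only [map_smul, H.one_grading, H.p_one_one, LinearMap.zero_apply,
    smul_zero, add_zero, zero_add]
  simp [hatOne, Prod.smul_mk]

lemma bwd_zero {k A : Type*} [Field k] [AddCommGroup A] [Module k A]
    (H : HopfSuperalgebra k A) (φ : A × A →ₗ[k] k)
    (hφ : H.IsHatComoduleMap φ) : ∀ a : A, φ (0, a) = 0 := by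
  have hone : H.one ≠ 0 := by
    intro h
    have := H.counit_one
    rw [h, map_zero] at this
    exact one_ne_zero this.symm
  intro a
  have h := hφ (0, a)
  rw [hatG] at h
  have h1 := congrArg Prod.fst h
  simp only [map_zero, add_zero, zero_add, LinearMap.map_zero,
    LinearMap.zero_apply] at h1
  have : φ (0, a) • H.one = 0 := by
    simpa [hatOne, Prod.smul_mk] using h1.symm
  rcases smul_eq_zero.mp this with h' | h'
  · exact h'
  · exact absurd h' hone

lemma bwd {k A : Type*} [Field k] [AddCommGroup A] [Module k A]
    (H : HopfSuperalgebra k A) (φ : A × A →ₗ[k] k)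
    (hφ : H.IsHatComoduleMap φ) :
    H.IsComoduleMap (φ ∘ₗ LinearMap.inl k A A) := by
  have hz : ∀ a : A, φ (0, a) = 0 := H.bwd_zero φ hφ
  have h1 : φ ∘ₗ LinearMap.inr k A A = 0 := by
    ext a; simpa using hz a
  have hL0 : H.L (0 : A →ₗ[k] k) = 0 := by
    unfold L; rw [TensorProduct.map_zero_left]; ext a; simp
  set ψ := φ ∘ₗ LinearMap.inl k A A with hψ
  intro a
  rw [← L_apply]
  -- evaluate the hat condition at (a, 0) and (0, a)
  have hA := hφ (a, 0)
  rw [hatG, h1, hL0] at hA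
  have hA1 := congrArg Prod.fst hA
  simp only [LinearMap.zero_apply, map_zero, add_zero, zero_add] at hA1
  have hB := hφ (0, a)
  rw [hatG, h1, hL0] at hB
  have hB2 := congrArg Prod.snd hB
  simp only [LinearMap.zero_apply, map_zero, add_zero, zero_add] at hB2
  have hA1' : H.p 0 (H.L ψ a) = ψ a • H.one := by
    simpa [hatOne, Prod.smul_mk, hψ] using hA1
  have hB2' : H.p 1 (H.L ψ a) = 0 := by
    simpa [hatOne, Prod.smul_mk] using hB2
  have hsum := LinearMap.congr_fun H.p_sum (H.L ψ a)
  simp only [LinearMap.add_apply, LinearMap.id_apply, hA1', hB2',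
    add_zero] at hsum
  have : ψ a = φ (a, 0) := by simp [hψ]
  rw [← hsum]

end HopfSuperalgebra

open HopfSuperalgebra

/-- Let `A` be a Hopf superalgebra over a field `k` and `Â = A ⋊ kZ₂` its
bosonization (modelled on `A × A`, with the smash coproduct `hatComul`).
There is a natural `k`-linear isomorphism between the space of right
`A`-supercomodule maps `A → k` and the space of right `Â`-comodule maps
`Â → k`, given by `ψ ↦ ψ ⊗ ω` where `ω(σ^i) = δ_{i,0}`; in the model `A × A`
this assignment is `ψ ↦ ψ ∘ fst`. -/
theorem stmt6 {k A : Type*} [Field k] [AddCommGroup A] [Module k A]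
    (H : HopfSuperalgebra k A) :
    ∃ e : {ψ : A →ₗ[k] k // H.IsComoduleMap ψ} ≃
          {φ : A × A →ₗ[k] k // H.IsHatComoduleMap φ},
      ∀ ψ : {ψ : A →ₗ[k] k // H.IsComoduleMap ψ},
        ((e ψ : {φ : A × A →ₗ[k] k // H.IsHatComoduleMap φ}) : A × A →ₗ[k] k)
          = (ψ : A →ₗ[k] k) ∘ₗ LinearMap.fst k A A := by
  refine ⟨{
    toFun := fun ψ => ⟨(ψ : A →ₗ[k] k) ∘ₗ LinearMap.fst k A A,
      H.fwd ψ ψ.2⟩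
    invFun := fun φ => ⟨(φ : A × A →ₗ[k] k) ∘ₗ LinearMap.inl k A A,
      H.bwd φ φ.2⟩
    left_inv := ?_
    right_inv := ?_ }, fun ψ => rfl⟩
  · intro ψ
    apply Subtype.ext
    ext a
    simp
  · intro φ
    apply Subtype.ext
    apply LinearMap.ext
    intro x
    have hz := H.bwd_zero (φ : A × A →ₗ[k] k) φ.2 x.2
    have : (φ : A × A →ₗ[k] k) x
        = (φ : A × A →ₗ[k] k) (x.1, 0) + (φ : A × A →ₗ[k] k) (0, x.2) := by
      rw [← map_add]; congr 1; ext <;> simp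
    simp [this, hz]
end

section
/- Let p be a prime, q = p^r, k a field of characteristic p, C a nonzero commutative k-algebra, τ ∈ C, A = k[T]/(T^q), B = C[T]/(T^q − τ) with coaction ρ(T) = 1 ⊗ T + T ⊗ 1. Then the Galois map β : B ⊗_C B → B ⊗ A, β(a ⊗ b) = a·ρ(b), is bijective; i.e., B/C is an A-Hopf–Galois extension. -/
open Polynomial TensorProduct

/-- The Hopf algebra `A = k[T]/(T^q)` of the infinitesimal group scheme `α_q`
(the Hopf structure, with `T` primitive, is encoded through the coaction `ρ`
below). -/
abbrev AlphaQ (k : Type*) [CommRing k] (q : ℕ) : Type _ :=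
  Polynomial k ⧸ Ideal.span ({Polynomial.X ^ q} : Set (Polynomial k))

/-- The class of `T` in `k[T]/(T^q)`. -/
noncomputable def AlphaQ.T (k : Type*) [CommRing k] (q : ℕ) : AlphaQ k q :=
  Ideal.Quotient.mk _ Polynomial.X

/-- `B = C[T]/(T^q − τ)`. -/
abbrev Btau (C : Type*) [CommRing C] (q : ℕ) (τ : C) : Type _ :=
  Polynomial C ⧸ Ideal.span ({Polynomial.X ^ q - Polynomial.C τ} : Set (Polynomial C))

/-- The class of `T` in `C[T]/(T^q − τ)`. -/
noncomputable def Btau.T (C : Type*) [CommRing C] (q : ℕ) (τ : C) : Btau C q τ :=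
  Ideal.Quotient.mk _ Polynomial.X

section Toolkit

variable {R A B : Type*} [CommSemiring R] [CommSemiring A] [Algebra R A]
  [CommSemiring B] [Algebra R B]

private lemma tmul_one_mul_tmul_one (a a' : A) :
    (a ⊗ₜ[R] (1 : B)) * (a' ⊗ₜ[R] (1 : B)) = (a * a') ⊗ₜ[R] (1 : B) := by
  rw [Algebra.TensorProduct.tmul_mul_tmul, mul_one]

private lemma tmul_one_mul_one_tmul (a : A) (b : B) :
    (a ⊗ₜ[R] (1 : B)) * ((1 : A) ⊗ₜ[R] b) = a ⊗ₜ[R] b := by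
  rw [Algebra.TensorProduct.tmul_mul_tmul, mul_one, one_mul]

private lemma one_tmul_pow (b : B) (n : ℕ) :
    ((1 : A) ⊗ₜ[R] b) ^ n = (1 : A) ⊗ₜ[R] (b ^ n) := by
  rw [Algebra.TensorProduct.tmul_pow, one_pow]

private lemma algebraMap_tmul_swap (c : R) (x : B) :
    (algebraMap R A c) ⊗ₜ[R] x = (1 : A) ⊗ₜ[R] (algebraMap R B c * x) := by
  rw [Algebra.algebraMap_eq_smul_one, Algebra.algebraMap_eq_smul_one,
    smul_mul_assoc, one_mul, TensorProduct.smul_tmul]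

private lemma algebraMap_tmul_one_mul (c : R) (x : B) :
    ((algebraMap R A c) ⊗ₜ[R] (1 : B)) * ((1 : A) ⊗ₜ[R] x)
      = (1 : A) ⊗ₜ[R] (algebraMap R B c * x) := by
  rw [tmul_one_mul_one_tmul, algebraMap_tmul_swap]

end Toolkit

set_option maxHeartbeats 4000000 in
set_option synthInstance.maxHeartbeats 1000000 in
/-- Let `p` be a prime, `q = p^r`, `k` a field of characteristic `p`, `C` a
nonzero commutative `k`-algebra, `τ ∈ C`, `A = k[T]/(T^q)`, and
`B = C[T]/(T^q − τ)` with the coaction `ρ : B → B ⊗ A` determined by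
`ρ(T) = T ⊗ 1 + 1 ⊗ T` and `ρ(c) = c ⊗ 1` for `c ∈ C`.  Then the Galois map
`β : B ⊗_C B → B ⊗ A`, `β(a ⊗ b) = (a ⊗ 1)·ρ(b)` (encoded as an additive map
pinned on pure tensors), is bijective; i.e. `B/C` is an `A`-Hopf–Galois
extension. -/
theorem stmt18 {k : Type*} [Field k] (p : ℕ) [Fact p.Prime] [CharP k p]
    (r : ℕ) (hr : 0 < r) (q : ℕ) (hq : q = p ^ r)
    (C : Type*) [CommRing C] [Algebra k C] [Nontrivial C] (τ : C)
    (ρ : Btau C q τ →ₐ[k] (Btau C q τ) ⊗[k] (AlphaQ k q))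
    (hρC : ∀ c : C, ρ (algebraMap C (Btau C q τ) c)
        = (algebraMap C (Btau C q τ) c) ⊗ₜ[k] 1)
    (hρT : ρ (Btau.T C q τ) = (Btau.T C q τ) ⊗ₜ[k] 1 + 1 ⊗ₜ[k] (AlphaQ.T k q))
    (β : (Btau C q τ) ⊗[C] (Btau C q τ) →+ (Btau C q τ) ⊗[k] (AlphaQ k q))
    (hβ : ∀ a b : Btau C q τ, β (a ⊗ₜ[C] b) = (a ⊗ₜ[k] (1 : AlphaQ k q)) * ρ b) :
    Function.Bijective β := by
  classical
  have hp : p.Prime := Fact.out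
  have hq0 : q ≠ 0 := by rw [hq]; exact pow_ne_zero r hp.pos.ne'
  set T : Btau C q τ := Btau.T C q τ with hT
  set t : AlphaQ k q := AlphaQ.T k q with ht
  have hmkC : ∀ c : C, algebraMap C (Btau C q τ) c
      = Ideal.Quotient.mk _ (Polynomial.C c) := fun c => rfl
  have hmkk : ∀ c : k, algebraMap k (AlphaQ k q) c
      = Ideal.Quotient.mk _ (Polynomial.C c) := fun c => rfl
  -- `T ^ q = τ` in `B`
  have hTq : T ^ q = algebraMap C (Btau C q τ) τ := by
    have h0 : (Ideal.Quotient.mk (Ideal.span ({Polynomial.X ^ q - Polynomial.C τ} :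
        Set (Polynomial C))) ((Polynomial.X : Polynomial C) ^ q - Polynomial.C τ)) = 0 :=
      Ideal.Quotient.eq_zero_iff_mem.mpr (Ideal.subset_span rfl)
    rw [map_sub, map_pow, sub_eq_zero] at h0
    rw [hmkC]
    exact h0
  -- nontriviality and characteristic
  have hmonic : ((Polynomial.X : Polynomial C) ^ q - Polynomial.C τ).Monic :=
    Polynomial.monic_X_pow_sub_C τ hq0
  let pb : PowerBasis C (Btau C q τ) := AdjoinRoot.powerBasis' hmonic
  have hdim : pb.dim = q := by
    simpa [pb, AdjoinRoot.powerBasis'_dim] using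
      (Polynomial.natDegree_X_pow_sub_C (n := q) (r := τ))
  haveI hBnt : Nontrivial (Btau C q τ) :=
    ⟨pb.basis ⟨0, by rw [hdim]; exact Nat.pos_of_ne_zero hq0⟩, 0, pb.basis.ne_zero _⟩
  haveI hSnt : Nontrivial ((Btau C q τ) ⊗[C] (Btau C q τ)) := by
    let bS := Algebra.TensorProduct.basis (Btau C q τ) pb.basis
    exact ⟨bS ⟨0, by rw [hdim]; exact Nat.pos_of_ne_zero hq0⟩, 0, bS.ne_zero _⟩
  haveI hchar : CharP ((Btau C q τ) ⊗[C] (Btau C q τ)) p :=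
    charP_of_injective_algebraMap
      (algebraMap k ((Btau C q τ) ⊗[C] (Btau C q τ))).injective p
  -- the element `d = 1 ⊗ T - T ⊗ 1` and its `q`-th power
  set d : (Btau C q τ) ⊗[C] (Btau C q τ) := (1 : Btau C q τ) ⊗ₜ[C] T - T ⊗ₜ[C] 1 with hdd
  have hdq : d ^ q = 0 := by
    have hfr := sub_pow_char_pow (p := p) ((1 : Btau C q τ) ⊗ₜ[C] T) (T ⊗ₜ[C] 1) r
    rw [← hq] at hfr
    rw [hdd, hfr, Algebra.TensorProduct.tmul_pow,
      Algebra.TensorProduct.tmul_pow, one_pow, hTq, Algebra.algebraMap_eq_smul_one,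
      TensorProduct.smul_tmul, sub_self]
  -- the algebra map `γA : A → B ⊗[C] B`, `t ↦ d`
  let φ : Polynomial k →ₐ[k] ((Btau C q τ) ⊗[C] (Btau C q τ)) := Polynomial.aeval d
  have hφ : ∀ a ∈ Ideal.span ({(Polynomial.X : Polynomial k) ^ q} : Set (Polynomial k)),
      φ a = 0 := by
    intro a ha
    rw [Ideal.mem_span_singleton] at ha
    obtain ⟨g, rfl⟩ := ha
    show Polynomial.aeval d ((Polynomial.X : Polynomial k) ^ q * g) = 0
    rw [Polynomial.aeval_mul, Polynomial.aeval_X_pow, hdq]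
    exact zero_mul (Polynomial.aeval d g)
  let γA : AlphaQ k q →ₐ[k] ((Btau C q τ) ⊗[C] (Btau C q τ)) :=
    Ideal.Quotient.liftₐ _ φ hφ
  have hγmk : ∀ g : Polynomial k, γA (Ideal.Quotient.mk _ g) = Polynomial.aeval d g := by
    intro g
    rw [show γA (Ideal.Quotient.mk _ g)
        = Ideal.Quotient.lift _ (φ : Polynomial k →+* _) hφ (Ideal.Quotient.mk _ g) from
      Ideal.Quotient.liftₐ_apply _ _ _ _]
    rfl
  have hγt : γA t = d := by
    rw [ht, show AlphaQ.T k q = Ideal.Quotient.mk _ Polynomial.X from rfl, hγmk,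
      Polynomial.aeval_X]
  -- the candidate inverse `Ψ : B ⊗[k] A → B ⊗[C] B`
  let u : (Btau C q τ) →ₐ[k] ((Btau C q τ) ⊗[C] (Btau C q τ)) :=
    Algebra.TensorProduct.includeLeft
  let Ψ : (Btau C q τ) ⊗[k] (AlphaQ k q) →ₐ[k] ((Btau C q τ) ⊗[C] (Btau C q τ)) :=
    Algebra.TensorProduct.lift u γA fun x y => mul_comm (u x) (γA y)
  have hΨ : ∀ (b : Btau C q τ) (h : AlphaQ k q),
      Ψ (b ⊗ₜ[k] h) = (b ⊗ₜ[C] (1 : Btau C q τ)) * γA h := by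
    intro b h
    rw [show Ψ (b ⊗ₜ[k] h) = u b * γA h from Algebra.TensorProduct.lift_tmul u γA _ b h,
      show u b = b ⊗ₜ[C] (1 : Btau C q τ) from Algebra.TensorProduct.includeLeft_apply b]
  -- `β` is multiplicative
  have hmul : ∀ x y : (Btau C q τ) ⊗[C] (Btau C q τ), β (x * y) = β x * β y := by
    intro x y
    induction x using TensorProduct.induction_on with
    | zero =>
      have h0 : (0 : (Btau C q τ) ⊗[C] (Btau C q τ)) * y = 0 := by ring
      rw [h0, map_zero]
      ring
    | tmul a b =>
      induction y using TensorProduct.induction_on with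
      | zero =>
        have h0 : a ⊗ₜ[C] b * (0 : (Btau C q τ) ⊗[C] (Btau C q τ)) = 0 := by ring
        rw [h0, map_zero]
        ring
      | tmul a' b' =>
        have key : (a ⊗ₜ[k] (1 : AlphaQ k q)) * (a' ⊗ₜ[k] (1 : AlphaQ k q))
            = (a * a') ⊗ₜ[k] (1 : AlphaQ k q) := tmul_one_mul_tmul_one a a'
        rw [Algebra.TensorProduct.tmul_mul_tmul, hβ, hβ, hβ, map_mul, ← key]
        ring
      | add y1 y2 h1 h2 =>
        have hd' : a ⊗ₜ[C] b * (y1 + y2) = a ⊗ₜ[C] b * y1 + a ⊗ₜ[C] b * y2 := by ring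
        rw [hd', map_add, h1, h2, map_add]
        ring
    | add x1 x2 h1 h2 =>
      have hd' : (x1 + x2) * y = x1 * y + x2 * y := by ring
      rw [hd', map_add, h1, h2, map_add]
      ring
  have hone : β 1 = 1 := by
    rw [Algebra.TensorProduct.one_def, hβ, (show ρ 1 = 1 from ρ.map_one), ← Algebra.TensorProduct.one_def]
    ring
  let βR : ((Btau C q τ) ⊗[C] (Btau C q τ)) →+* ((Btau C q τ) ⊗[k] (AlphaQ k q)) :=
    { toFun := β, map_one' := hone, map_mul' := hmul,
      map_zero' := map_zero β, map_add' := map_add β }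
  have hβR : ∀ x, βR x = β x := fun _ => rfl
  -- key computations of `β` on special elements
  have hβb1 : ∀ b : Btau C q τ, β (b ⊗ₜ[C] (1 : Btau C q τ)) = b ⊗ₜ[k] (1 : AlphaQ k q) := by
    intro b
    rw [hβ, (show ρ 1 = 1 from ρ.map_one)]
    ring
  have hβd : β d = (1 : Btau C q τ) ⊗ₜ[k] t := by
    rw [hdd, map_sub, hβ, hβb1, hρT, ← Algebra.TensorProduct.one_def]
    ring
  have hβalgk : ∀ c : k, β (@algebraMap k ((Btau C q τ) ⊗[C] (Btau C q τ)) _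
        Algebra.TensorProduct.instSemiring Algebra.TensorProduct.leftAlgebra c)
      = @algebraMap k ((Btau C q τ) ⊗[k] (AlphaQ k q)) _ Algebra.TensorProduct.instSemiring
        Algebra.TensorProduct.instAlgebra c := by
    intro c
    rw [Algebra.TensorProduct.algebraMap_apply, hβb1,
      Algebra.TensorProduct.algebraMap_apply]
  -- `β ∘ γA` is the right inclusion
  have hβγ : ∀ h : AlphaQ k q, β (γA h) = (1 : Btau C q τ) ⊗ₜ[k] h := by
    intro h
    obtain ⟨g, rfl⟩ := Ideal.Quotient.mk_surjective h
    induction g using Polynomial.induction_on' with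
    | add g1 g2 hg1 hg2 =>
      rw [map_add, map_add, map_add, hg1, hg2, TensorProduct.tmul_add]
    | monomial n c =>
      have hmonA : (Ideal.Quotient.mk (Ideal.span ({(Polynomial.X : Polynomial k) ^ q} :
            Set (Polynomial k))) (Polynomial.monomial n c))
          = algebraMap k (AlphaQ k q) c * t ^ n := by
        rw [hmkk]
        show _ = _ * (Ideal.Quotient.mk _ (Polynomial.X : Polynomial k)) ^ n
        rw [← map_pow, ← map_mul, Polynomial.C_mul_X_pow_eq_monomial]
      rw [hγmk, Polynomial.aeval_monomial]
      calc β (algebraMap k _ c * d ^ n)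
          = βR (algebraMap k _ c * d ^ n) := rfl
        _ = βR (algebraMap k _ c) * (βR d) ^ n := by rw [map_mul, map_pow]
        _ = @algebraMap k ((Btau C q τ) ⊗[k] (AlphaQ k q)) _ Algebra.TensorProduct.instSemiring
              Algebra.TensorProduct.instAlgebra c
              * ((1 : Btau C q τ) ⊗ₜ[k] t) ^ n := by rw [hβR, hβR, hβalgk, hβd]
        _ = (1 : Btau C q τ) ⊗ₜ[k] (Ideal.Quotient.mk _ (Polynomial.monomial n c)) := by
            rw [hmonA, Algebra.TensorProduct.algebraMap_apply, one_tmul_pow,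
              algebraMap_tmul_one_mul]
  -- right inverse : `β ∘ Ψ = id`
  have hright : ∀ w : (Btau C q τ) ⊗[k] (AlphaQ k q), β (Ψ w) = w := by
    intro w
    induction w using TensorProduct.induction_on with
    | zero => rw [map_zero, map_zero]
    | tmul b h => rw [hΨ, hmul, hβb1, hβγ, tmul_one_mul_one_tmul]
    | add w1 w2 h1 h2 => rw [map_add, map_add, h1, h2]
  -- left inverse : `Ψ ∘ β = id`
  have hΨβmul : ∀ x y : (Btau C q τ) ⊗[C] (Btau C q τ),
      Ψ (β (x * y)) = Ψ (β x) * Ψ (β y) := by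
    intro x y
    rw [hmul, map_mul]
  have hfix1 : ∀ b : Btau C q τ, Ψ (β (b ⊗ₜ[C] (1 : Btau C q τ)))
      = b ⊗ₜ[C] (1 : Btau C q τ) := by
    intro b
    rw [hβb1, hΨ, (show γA 1 = 1 from γA.map_one)]
    ring
  have hfixT : Ψ (β ((1 : Btau C q τ) ⊗ₜ[C] T)) = (1 : Btau C q τ) ⊗ₜ[C] T := by
    rw [hβ, ← Algebra.TensorProduct.one_def]
    have h1 : (1 : (Btau C q τ) ⊗[k] (AlphaQ k q)) * ρ T = ρ T := by ring
    rw [h1, hρT, map_add, hΨ, hΨ, (show γA 1 = 1 from γA.map_one), hγt, hdd, ← Algebra.TensorProduct.one_def]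
    ring
  have hfixTn : ∀ n : ℕ, Ψ (β (((1 : Btau C q τ) ⊗ₜ[C] T) ^ n))
      = ((1 : Btau C q τ) ⊗ₜ[C] T) ^ n := by
    intro n
    induction n with
    | zero =>
      have h0 : ((1 : Btau C q τ) ⊗ₜ[C] T) ^ 0
          = (1 : (Btau C q τ) ⊗[C] (Btau C q τ)) := by ring
      rw [h0, hone, (show Ψ 1 = 1 from Ψ.map_one)]
    | succ m hm =>
      have hs : ((1 : Btau C q τ) ⊗ₜ[C] T) ^ (m + 1)
          = ((1 : Btau C q τ) ⊗ₜ[C] T) ^ m * ((1 : Btau C q τ) ⊗ₜ[C] T) := by ring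
      rw [hs, hΨβmul, hm, hfixT]
  have hfixR : ∀ b : Btau C q τ, Ψ (β ((1 : Btau C q τ) ⊗ₜ[C] b))
      = (1 : Btau C q τ) ⊗ₜ[C] b := by
    intro b
    obtain ⟨g, rfl⟩ := Ideal.Quotient.mk_surjective b
    induction g using Polynomial.induction_on' with
    | add g1 g2 hg1 hg2 =>
      rw [map_add, TensorProduct.tmul_add, map_add, map_add, hg1, hg2]
    | monomial n c =>
      have hmon : (Ideal.Quotient.mk (Ideal.span ({Polynomial.X ^ q - Polynomial.C τ} :
            Set (Polynomial C))) (Polynomial.monomial n c))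
          = algebraMap C (Btau C q τ) c * T ^ n := by
        rw [hmkC]
        show _ = _ * (Ideal.Quotient.mk _ (Polynomial.X : Polynomial C)) ^ n
        rw [← map_pow, ← map_mul, Polynomial.C_mul_X_pow_eq_monomial]
      have hsplit : (1 : Btau C q τ) ⊗ₜ[C] (algebraMap C (Btau C q τ) c * T ^ n)
          = ((algebraMap C (Btau C q τ) c) ⊗ₜ[C] (1 : Btau C q τ))
            * ((1 : Btau C q τ) ⊗ₜ[C] T) ^ n := by
        rw [one_tmul_pow, algebraMap_tmul_one_mul]
      rw [hmon, hsplit, hΨβmul, hfix1, hfixTn n]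
  have hleft : ∀ z : (Btau C q τ) ⊗[C] (Btau C q τ), Ψ (β z) = z := by
    intro z
    induction z using TensorProduct.induction_on with
    | zero => rw [map_zero, map_zero]
    | tmul a b =>
      rw [← tmul_one_mul_one_tmul (R := C) a b, hΨβmul, hfix1, hfixR]
    | add z1 z2 h1 h2 => rw [map_add, map_add, h1, h2]
  exact Function.bijective_iff_has_inverse.mpr ⟨Ψ, hleft, hright⟩
end

section
/- Let A be a super-commutative Hopf superalgebra over a field. Then the antipode s of A is an involution (s ∘ s = id), and consequently the antipode S of the bosonization = A ⋊ kZ₂, given by S(a ⊗ σ^i) = (−1)^{i+|a|} s(a) ⊗ σ^{i+|a|}, is bijective. -/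
open TensorProduct

namespace HopfSuperalgebra

variable {k A : Type*} [CommRing k] [AddCommGroup A] [Module k A]

/-- The antipode `S` of the bosonization `Â = A ⋊ kZ₂` (modelled on `A × A`),
given by `S(a ⊗ σ^i) = (−1)^{i+|a|} s(a) ⊗ σ^{i+|a|}`, where `s` is the
antipode of `A`. -/
def hatAntipode (H : HopfSuperalgebra k A) : A × A →ₗ[k] A × A :=
  LinearMap.prod
    ((H.antipode ∘ₗ H.p 0) ∘ₗ LinearMap.fst k A A
      + (H.antipode ∘ₗ H.p 1) ∘ₗ LinearMap.snd k A A)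
    (-((H.antipode ∘ₗ H.p 1) ∘ₗ LinearMap.fst k A A)
      - (H.antipode ∘ₗ H.p 0) ∘ₗ LinearMap.snd k A A)

end HopfSuperalgebra

open HopfSuperalgebra


namespace HopfSuperalgebra

variable {k A : Type*} [CommRing k] [AddCommGroup A] [Module k A]

section Basics

variable (H : HopfSuperalgebra k A)

lemma sumZ2 {M : Type*} [AddCommMonoid M] (f : ZMod 2 → M) :
    (∑ i : ZMod 2, f i) = f 0 + f 1 := Fin.sum_univ_two f

lemma p_add_apply (a : A) : H.p 0 a + H.p 1 a = a := by
  have := LinearMap.congr_fun H.p_sum a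
  simpa using this

lemma p_p_ne {i j : ZMod 2} (h : i ≠ j) (a : A) : H.p i (H.p j a) = 0 := by
  have := LinearMap.congr_fun (H.p_orth i j h) a
  simpa using this

lemma p_p (i : ZMod 2) (a : A) : H.p i (H.p i a) = H.p i a := by
  have h2 := p_add_apply H (H.p i a)
  rcases (show ∀ i : ZMod 2, i = 0 ∨ i = 1 by decide) i with rfl | rfl
  · rw [p_p_ne H (show (1:ZMod 2) ≠ 0 by decide)] at h2; simpa using h2
  · rw [p_p_ne H (show (0:ZMod 2) ≠ 1 by decide)] at h2; simpa using h2

lemma p1_one : H.p 1 H.one = 0 := by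
  rw [← H.one_grading, p_p_ne H (show (1:ZMod 2) ≠ 0 by decide)]

lemma counit_p1 (a : A) : H.counit (H.p 1 a) = 0 := by
  have := LinearMap.congr_fun H.counit_grading a
  simpa using this

lemma counit_p0 (a : A) : H.counit (H.p 0 a) = H.counit a := by
  conv_rhs => rw [← p_add_apply H a]
  rw [map_add, counit_p1 H]
  simp

/-- the multiplication as a map `A ⊗ A → A` -/
noncomputable def muM : A ⊗[k] A →ₗ[k] A := TensorProduct.lift H.mul

@[simp] lemma muM_tmul (a b : A) : H.muM (a ⊗ₜ[k] b) = H.mul a b := rfl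

/-- the convolution unit `a ↦ ε(a) • 1` -/
noncomputable def cuM : A →ₗ[k] A := H.counit.smulRight H.one

@[simp] lemma cuM_apply (a : A) : H.cuM a = H.counit a • H.one := rfl

end Basics

section Conv

variable (H : HopfSuperalgebra k A)
variable {C : Type*} [AddCommGroup C] [Module k C]

/-- convolution of `f g : C →ₗ A` with respect to a comultiplication `D` on `C` -/
noncomputable def cv (D : C →ₗ[k] C ⊗[k] C) (f g : C →ₗ[k] A) : C →ₗ[k] A :=
  H.muM ∘ₗ map f g ∘ₗ D

lemma cv_apply (D : C →ₗ[k] C ⊗[k] C) (f g : C →ₗ[k] A) (x : C) :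
    H.cv D f g x = H.muM (map f g (D x)) := rfl

lemma muM_assoc_map :
    H.muM ∘ₗ map H.muM LinearMap.id =
      H.muM ∘ₗ map LinearMap.id H.muM ∘ₗ (TensorProduct.assoc k A A A).toLinearMap := by
  apply TensorProduct.ext_threefold
  intro a b c
  simp [H.mul_assoc]

lemma cv_assoc (D : C →ₗ[k] C ⊗[k] C)
    (hco : ∀ x : C, (TensorProduct.assoc k C C C) ((map D LinearMap.id) (D x)) =
      (map LinearMap.id D) (D x)) (f g h : C →ₗ[k] A) :
    H.cv D (H.cv D f g) h = H.cv D f (H.cv D g h) := by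
  apply LinearMap.ext; intro x
  have h1 : (map D LinearMap.id) (D x) =
      (TensorProduct.assoc k C C C).symm ((map LinearMap.id D) (D x)) := by
    rw [← hco x]; simp
  have e1 : map (H.cv D f g) h = map H.muM LinearMap.id ∘ₗ
      map (map f g) h ∘ₗ map D LinearMap.id := by
    rw [← TensorProduct.map_comp, ← TensorProduct.map_comp]
    simp [cv, LinearMap.comp_assoc]
  have e2 : map f (H.cv D g h) = map LinearMap.id H.muM ∘ₗ
      map f (map g h) ∘ₗ map LinearMap.id D := by
    rw [← TensorProduct.map_comp, ← TensorProduct.map_comp]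
    simp [cv, LinearMap.comp_assoc]
  calc H.cv D (H.cv D f g) h x
      = H.muM (map H.muM LinearMap.id
          ((map (map f g) h) ((map D LinearMap.id) (D x)))) := by
        rw [cv_apply, e1]; rfl
    _ = H.muM (map H.muM LinearMap.id ((TensorProduct.assoc k A A A).symm
          ((map f (map g h)) ((map LinearMap.id D) (D x))))) := by
        rw [h1, TensorProduct.map_map_assoc_symm]
    _ = H.muM (map LinearMap.id H.muM ((map f (map g h)) ((map LinearMap.id D) (D x)))) := by
        have := LinearMap.congr_fun H.muM_assoc_map
          ((TensorProduct.assoc k A A A).symm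
            ((map f (map g h)) ((map LinearMap.id D) (D x))))
        simp only [LinearMap.comp_apply, LinearEquiv.coe_coe] at this
        rw [this]; simp
    _ = H.cv D f (H.cv D g h) x := by
        rw [cv_apply, e2]; rfl

lemma cv_unit_left (D : C →ₗ[k] C ⊗[k] C) (e : C →ₗ[k] k)
    (hl : ∀ x : C, (TensorProduct.lid k C) ((map e LinearMap.id) (D x)) = x)
    (f : C →ₗ[k] A) : H.cv D (e.smulRight H.one) f = f := by
  have key : H.muM ∘ₗ map (e.smulRight H.one) f =
      f ∘ₗ (TensorProduct.lid k C).toLinearMap ∘ₗ map e LinearMap.id := by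
    apply TensorProduct.ext'
    intro x y
    simp [H.one_mul]
  apply LinearMap.ext; intro x
  rw [cv_apply, ← LinearMap.comp_apply, key]
  simp only [LinearMap.comp_apply, LinearEquiv.coe_coe]
  rw [hl x]

lemma cv_unit_right (D : C →ₗ[k] C ⊗[k] C) (e : C →ₗ[k] k)
    (hr : ∀ x : C, (TensorProduct.rid k C) ((map LinearMap.id e) (D x)) = x)
    (f : C →ₗ[k] A) : H.cv D f (e.smulRight H.one) = f := by
  have key : H.muM ∘ₗ map f (e.smulRight H.one) =
      f ∘ₗ (TensorProduct.rid k C).toLinearMap ∘ₗ map LinearMap.id e := by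
    apply TensorProduct.ext'
    intro x y
    simp [H.mul_one, TensorProduct.smul_tmul']
  apply LinearMap.ext; intro x
  rw [cv_apply, ← LinearMap.comp_apply, key]
  simp only [LinearMap.comp_apply, LinearEquiv.coe_coe]
  rw [hr x]

end Conv

end HopfSuperalgebra

namespace HopfSuperalgebra

variable {k A : Type*} [CommRing k] [AddCommGroup A] [Module k A]

section ConvA

variable (H : HopfSuperalgebra k A)

/-- convolution on `Hom(A, A)` -/
noncomputable def cvA (f g : A →ₗ[k] A) : A →ₗ[k] A := H.cv H.comul f g

lemma cvA_assoc (f g h : A →ₗ[k] A) :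
    H.cvA (H.cvA f g) h = H.cvA f (H.cvA g h) :=
  H.cv_assoc H.comul H.coassoc f g h

lemma cvA_unit_left (f : A →ₗ[k] A) : H.cvA H.cuM f = f :=
  H.cv_unit_left H.comul H.counit H.counit_comul f

lemma cvA_unit_right (f : A →ₗ[k] A) : H.cvA f H.cuM = f :=
  H.cv_unit_right H.comul H.counit H.comul_counit f

lemma cvA_s_id : H.cvA H.antipode LinearMap.id = H.cuM := by
  apply LinearMap.ext; intro a
  rw [cvA, cv_apply]
  simpa [muM] using H.antipode_left a

lemma cvA_id_s : H.cvA LinearMap.id H.antipode = H.cuM := by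
  apply LinearMap.ext; intro a
  rw [cvA, cv_apply]
  simpa [muM] using H.antipode_right a

lemma s_one : H.antipode H.one = H.one := by
  have := H.antipode_left H.one
  rw [H.comul_one] at this
  simpa [H.mul_one, H.counit_one] using this

/-- `f` maps the degree-`i` part into the degree-`i+d` part -/
def Pure (d : ZMod 2) (f : A →ₗ[k] A) : Prop :=
  ∀ (i : ZMod 2) (a : A), H.p (i + d) (f (H.p i a)) = f (H.p i a)

lemma pure_id : H.Pure 0 LinearMap.id := by
  intro i a; simp [p_p]

lemma pure_cuM : H.Pure 0 H.cuM := by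
  intro i a
  rcases (show ∀ i : ZMod 2, i = 0 ∨ i = 1 by decide) i with rfl | rfl
  · simp [H.one_grading]
  · simp [counit_p1]

lemma mu_grading' (α β : ZMod 2) (x : A ⊗[k] A) :
    H.p (α + β) (H.muM (map (H.p α) (H.p β) x)) = H.muM (map (H.p α) (H.p β) x) := by
  induction x with
  | zero => simp
  | tmul a b => simpa using H.mul_grading α β a b
  | add y z hy hz => simp only [map_add, hy, hz]

lemma comul_p (i : ZMod 2) (a : A) :
    H.comul (H.p i a) = ∑ m : ZMod 2, (map (H.p m) (H.p (i - m))) (H.comul a) := by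
  have := LinearMap.congr_fun (H.comul_grading i) a
  simpa using this

lemma pure_cvA {d d' : ZMod 2} {f g : A →ₗ[k] A} (hf : H.Pure d f) (hg : H.Pure d' g) :
    H.Pure (d + d') (H.cvA f g) := by
  intro i a
  rw [cvA, cv_apply, comul_p]
  rw [map_sum, map_sum, map_sum]
  refine Finset.sum_congr rfl fun m _ => ?_
  have hfg : (map f g) ((map (H.p m) (H.p (i - m))) (H.comul a)) =
      (map (H.p (m + d)) (H.p ((i - m) + d')))
        ((map f g) ((map (H.p m) (H.p (i - m))) (H.comul a))) := by
    generalize H.comul a = x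
    induction x with
    | zero => simp
    | tmul u v =>
        simp only [TensorProduct.map_tmul]
        rw [← hf m u, ← hg (i - m) v]
        rw [p_p, p_p, hf m u, hg (i - m) v]
    | add y z hy hz =>
        simp only [map_add]
        conv_lhs => rw [hy, hz]
  rw [hfg]
  have : (i + (d + d')) = (m + d) + ((i - m) + d') := by ring
  rw [this, mu_grading']

end ConvA

section Graded

variable (H : HopfSuperalgebra k A)

/-- degree-preserving part of the antipode -/
noncomputable def sZero : A →ₗ[k] A :=
  H.p 0 ∘ₗ H.antipode ∘ₗ H.p 0 + H.p 1 ∘ₗ H.antipode ∘ₗ H.p 1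

/-- degree-reversing part of the antipode -/
noncomputable def sOne : A →ₗ[k] A :=
  H.p 1 ∘ₗ H.antipode ∘ₗ H.p 0 + H.p 0 ∘ₗ H.antipode ∘ₗ H.p 1

lemma s_decomp : H.antipode = H.sZero + H.sOne := by
  apply LinearMap.ext; intro a
  simp only [sZero, sOne, LinearMap.add_apply, LinearMap.comp_apply]
  conv_lhs => rw [← p_add_apply H a, map_add, ← p_add_apply H (H.antipode (H.p 0 a)),
    ← p_add_apply H (H.antipode (H.p 1 a))]
  abel

lemma pure_sZero : H.Pure 0 H.sZero := by
  intro i a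
  rcases (show ∀ i : ZMod 2, i = 0 ∨ i = 1 by decide) i with rfl | rfl <;>
    simp [sZero, p_p, show (1+1:ZMod 2) = 0 by decide, p_p_ne H (show (0:ZMod 2) ≠ 1 by decide),
      p_p_ne H (show (1:ZMod 2) ≠ 0 by decide)]

lemma pure_sOne : H.Pure 1 H.sOne := by
  intro i a
  rcases (show ∀ i : ZMod 2, i = 0 ∨ i = 1 by decide) i with rfl | rfl <;>
    simp [sOne, p_p, show (1+1:ZMod 2) = 0 by decide, p_p_ne H (show (0:ZMod 2) ≠ 1 by decide),
      p_p_ne H (show (1:ZMod 2) ≠ 0 by decide)]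

lemma cvA_add_left (f f' g : A →ₗ[k] A) :
    H.cvA (f + f') g = H.cvA f g + H.cvA f' g := by
  apply LinearMap.ext; intro a
  simp [cvA, cv_apply, TensorProduct.map_add_left]

lemma cvA_add_right (f g g' : A →ₗ[k] A) :
    H.cvA f (g + g') = H.cvA f g + H.cvA f g' := by
  apply LinearMap.ext; intro a
  simp [cvA, cv_apply, TensorProduct.map_add_right]

lemma cvA_zero_left (g : A →ₗ[k] A) : H.cvA 0 g = 0 := by
  apply LinearMap.ext; intro a
  simp [cvA, cv_apply, TensorProduct.map_zero_left]

lemma pure_eval_ne {d e : ZMod 2} {f : A →ₗ[k] A} (hf : H.Pure d f) (hne : d ≠ e)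
    (i : ZMod 2) (a : A) : H.p (i + e) (f (H.p i a)) = 0 := by
  rw [← hf i a]
  exact p_p_ne H (by
    intro hc
    exact hne (by
      have : (i + e) = (i + d) → e = d := by
        intro h; have := congrArg (fun t => t - i) h; simpa [add_comm, add_sub_cancel_left] using this
      exact (this hc).symm)) _

lemma cvA_sOne_id : H.cvA H.sOne LinearMap.id = 0 := by
  have hsum : H.cvA H.sZero LinearMap.id + H.cvA H.sOne LinearMap.id = H.cuM := by
    rw [← cvA_add_left, ← s_decomp, cvA_s_id]
  have h0 : H.Pure 0 (H.cvA H.sZero LinearMap.id) := by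
    simpa using H.pure_cvA H.pure_sZero H.pure_id
  have h1 : H.Pure 1 (H.cvA H.sOne LinearMap.id) := by
    simpa using H.pure_cvA H.pure_sOne H.pure_id
  apply LinearMap.ext; intro a
  have key : ∀ (i : ZMod 2) (b : A), H.cvA H.sOne LinearMap.id (H.p i b) = 0 := by
    intro i b
    have := congrArg (fun t => H.p (i + 1) t) (LinearMap.congr_fun hsum (H.p i b))
    simp only [LinearMap.add_apply, map_add] at this
    rw [h1 i b] at this
    rw [H.pure_eval_ne h0 (by decide) i b] at this
    rw [H.pure_eval_ne H.pure_cuM (by decide) i b] at this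
    simpa using this
  calc H.cvA H.sOne LinearMap.id a
      = H.cvA H.sOne LinearMap.id (H.p 0 a) + H.cvA H.sOne LinearMap.id (H.p 1 a) := by
        rw [← map_add, p_add_apply]
    _ = 0 := by rw [key, key]; simp

lemma cvA_id_sOne : H.cvA LinearMap.id H.sOne = 0 := by
  have hsum : H.cvA LinearMap.id H.sZero + H.cvA LinearMap.id H.sOne = H.cuM := by
    rw [← cvA_add_right, ← s_decomp, cvA_id_s]
  have h0 : H.Pure 0 (H.cvA LinearMap.id H.sZero) := by
    simpa using H.pure_cvA H.pure_id H.pure_sZero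
  have h1 : H.Pure 1 (H.cvA LinearMap.id H.sOne) := by
    simpa using H.pure_cvA H.pure_id H.pure_sOne
  apply LinearMap.ext; intro a
  have key : ∀ (i : ZMod 2) (b : A), H.cvA LinearMap.id H.sOne (H.p i b) = 0 := by
    intro i b
    have := congrArg (fun t => H.p (i + 1) t) (LinearMap.congr_fun hsum (H.p i b))
    simp only [LinearMap.add_apply, map_add] at this
    rw [h1 i b] at this
    rw [H.pure_eval_ne h0 (by decide) i b] at this
    rw [H.pure_eval_ne H.pure_cuM (by decide) i b] at this
    simpa using this
  calc H.cvA LinearMap.id H.sOne a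
      = H.cvA LinearMap.id H.sOne (H.p 0 a) + H.cvA LinearMap.id H.sOne (H.p 1 a) := by
        rw [← map_add, p_add_apply]
    _ = 0 := by rw [key, key]; simp

lemma cvA_id_sZero : H.cvA LinearMap.id H.sZero = H.cuM := by
  have hsum : H.cvA LinearMap.id H.sZero + H.cvA LinearMap.id H.sOne = H.cuM := by
    rw [← cvA_add_right, ← s_decomp, cvA_id_s]
  rw [cvA_id_sOne] at hsum
  simpa using hsum

lemma sOne_eq_zero : H.sOne = 0 := by
  have h1 : H.sOne = H.cvA H.sOne H.cuM := (H.cvA_unit_right H.sOne).symm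
  rw [← cvA_id_sZero, ← cvA_assoc, cvA_sOne_id, cvA_zero_left] at h1
  exact h1

lemma s_graded : H.antipode = H.sZero := by
  rw [s_decomp, sOne_eq_zero, add_zero]

lemma p_s (i : ZMod 2) (a : A) : H.p i (H.antipode a) = H.antipode (H.p i a) := by
  conv_lhs => rw [s_graded]
  conv_rhs => rw [s_graded]
  rcases (show ∀ i : ZMod 2, i = 0 ∨ i = 1 by decide) i with rfl | rfl <;>
  · simp only [sZero, LinearMap.add_apply, LinearMap.comp_apply, map_add]
    simp [p_p, p_p_ne H (show (0:ZMod 2) ≠ 1 by decide),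
      p_p_ne H (show (1:ZMod 2) ≠ 0 by decide)]

end Graded

end HopfSuperalgebra

namespace HopfSuperalgebra

variable {k A : Type*} [CommRing k] [AddCommGroup A] [Module k A]

section DhatDefs

/-- the super sign `(-1)^{ij}` as an element of `k` -/
def sg (k : Type*) [CommRing k] (i j : ZMod 2) : k :=
  (((-1 : ℤ) ^ (i.val * j.val) : ℤ) : k)

variable (k A) in
/-- the middle-interchange map -/
noncomputable def tttA : (A ⊗[k] A) ⊗[k] (A ⊗[k] A) →ₗ[k] (A ⊗[k] A) ⊗[k] (A ⊗[k] A) :=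
  (tensorTensorTensorComm k A A A A).toLinearMap

@[simp] lemma tttA_tmul (a b c d : A) :
    tttA k A ((a ⊗ₜ b) ⊗ₜ (c ⊗ₜ d)) = (a ⊗ₜ c) ⊗ₜ (b ⊗ₜ d) := rfl

variable (H : HopfSuperalgebra k A)

/-- `a ↦ Σ a₁ ⊗ p i a₂` -/
noncomputable def Uc (i : ZMod 2) : A →ₗ[k] A ⊗[k] A :=
  map LinearMap.id (H.p i) ∘ₗ H.comul

/-- `a ↦ Σ p j a₁ ⊗ a₂` -/
noncomputable def Vc (j : ZMod 2) : A →ₗ[k] A ⊗[k] A :=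
  map (H.p j) LinearMap.id ∘ₗ H.comul

/-- the comultiplication of the super tensor-square coalgebra `A ⊗ A` -/
noncomputable def Dhat : A ⊗[k] A →ₗ[k] (A ⊗[k] A) ⊗[k] (A ⊗[k] A) :=
  ∑ i : ZMod 2, ∑ j : ZMod 2, sg k i j • (tttA k A ∘ₗ map (H.Uc i) (H.Vc j))

/-- the counit of `A ⊗ A` -/
noncomputable def epsHat : A ⊗[k] A →ₗ[k] k :=
  LinearMap.mul' k k ∘ₗ map H.counit H.counit

@[simp] lemma epsHat_tmul (a b : A) :
    H.epsHat (a ⊗ₜ b) = H.counit a * H.counit b := rfl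

lemma Dhat_apply (x : A ⊗[k] A) :
    H.Dhat x = ∑ i : ZMod 2, ∑ j : ZMod 2,
      sg k i j • (tttA k A ((map (H.Uc i) (H.Vc j)) x)) := by
  simp [Dhat, LinearMap.sum_apply]

lemma sg_zero_left (j : ZMod 2) : sg k 0 j = 1 := by simp [sg]

lemma sg_zero_right (i : ZMod 2) : sg k i 0 = 1 := by simp [sg]

lemma sg_mul_sg (i j : ZMod 2) : sg k i j * sg k j i = 1 := by
  have h : ((-1 : ℤ) ^ (i.val * j.val) * (-1 : ℤ) ^ (j.val * i.val) : ℤ) = 1 := by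
    rw [← pow_add]
    exact Even.neg_one_pow ⟨i.val * j.val, by ring⟩
  calc sg k i j * sg k j i
      = (((-1 : ℤ) ^ (i.val * j.val) * (-1 : ℤ) ^ (j.val * i.val) : ℤ) : k) := by
        rw [sg, sg, Int.cast_mul]
    _ = 1 := by rw [h]; simp

end DhatDefs

section GradeLemmas

lemma z2sub1 : ∀ i u : ZMod 2, i - (i + u) = u := by decide
lemma z2sub2 : ∀ i u : ZMod 2, i - (i + u + 1) = u + 1 := by decide
lemma z2sub3 : ∀ j v : ZMod 2, j - v = j + v := by decide
lemma z2sub4 : ∀ j v : ZMod 2, j - (v + 1) = j + v + 1 := by decide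

variable (H : HopfSuperalgebra k A)

lemma sum_shift (c : ZMod 2) {M : Type*} [AddCommMonoid M] (g : ZMod 2 → M) :
    (∑ m : ZMod 2, g m) = g c + g (c + 1) := by
  have h := Equiv.sum_comp (Equiv.addLeft c) g
  rw [← h, sumZ2]
  simp

lemma gradeA (i u : ZMod 2) :
    map LinearMap.id (H.p u) ∘ₗ H.comul ∘ₗ H.p i =
      map (H.p (i + u)) (H.p u) ∘ₗ H.comul := by
  apply LinearMap.ext; intro a
  simp only [LinearMap.comp_apply]
  rw [comul_p, map_sum, sum_shift (i + u)]
  rw [z2sub1 i u, z2sub2 i u]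
  generalize H.comul a = y
  induction y with
  | zero => simp
  | tmul y1 y2 =>
      simp only [TensorProduct.map_tmul, LinearMap.id_apply]
      rw [p_p, p_p_ne H (show u ≠ u + 1 by revert u; decide)]
      simp
  | add y z hy hz =>
      simp only [map_add]
      rw [add_add_add_comm, hy, hz]

lemma gradeB (j v : ZMod 2) :
    map (H.p v) LinearMap.id ∘ₗ H.comul ∘ₗ H.p j =
      map (H.p v) (H.p (j + v)) ∘ₗ H.comul := by
  apply LinearMap.ext; intro a
  simp only [LinearMap.comp_apply]
  rw [comul_p, map_sum, sum_shift v]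
  rw [z2sub3 j v, z2sub4 j v]
  generalize H.comul a = y
  induction y with
  | zero => simp
  | tmul y1 y2 =>
      simp only [TensorProduct.map_tmul, LinearMap.id_apply]
      rw [p_p, p_p_ne H (show v ≠ v + 1 by revert v; decide)]
      simp
  | add y z hy hz =>
      simp only [map_add]
      rw [add_add_add_comm, hy, hz]

lemma coassoc_map :
    (TensorProduct.assoc k A A A).toLinearMap ∘ₗ map H.comul LinearMap.id ∘ₗ H.comul =
      map LinearMap.id H.comul ∘ₗ H.comul := by
  apply LinearMap.ext; intro a
  simpa using H.coassoc a

lemma coassoc_map' :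
    map H.comul LinearMap.id ∘ₗ H.comul =
      (TensorProduct.assoc k A A A).symm.toLinearMap ∘ₗ map LinearMap.id H.comul ∘ₗ H.comul := by
  rw [← coassoc_map]
  apply LinearMap.ext; intro a
  simp

lemma eps_p0_map : H.counit ∘ₗ H.p 0 = H.counit := by
  apply LinearMap.ext; intro a
  simpa using counit_p0 H a

lemma eps_p1_map : H.counit ∘ₗ H.p 1 = 0 := H.counit_grading

end GradeLemmas

section Structural

variable {X Y : Type*} [AddCommGroup X] [Module k X] [AddCommGroup Y] [Module k Y]

lemma st1 (u : A →ₗ[k] X) (v : A →ₗ[k] Y) :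
    map (LinearMap.id : A ⊗[k] A →ₗ[k] A ⊗[k] A) (map u v) ∘ₗ tttA k A =
      (tensorTensorTensorComm k A X A Y).toLinearMap ∘ₗ
        map (map LinearMap.id u) (map LinearMap.id v) := by
  apply TensorProduct.ext_fourfold'
  intro a b c d
  simp [tttA]

lemma st2 (u : A →ₗ[k] X) (v : A →ₗ[k] Y) :
    map (map u v) (LinearMap.id : A ⊗[k] A →ₗ[k] A ⊗[k] A) ∘ₗ tttA k A =
      (tensorTensorTensorComm k X A Y A).toLinearMap ∘ₗ
        map (map u LinearMap.id) (map v LinearMap.id) := by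
  apply TensorProduct.ext_fourfold'
  intro a b c d
  simp [tttA]

/-- `map id (g₂ ∘ g₁) = map id g₂ ∘ map id g₁` -/
lemma map_id_comp {M P Q R : Type*} [AddCommGroup M] [Module k M] [AddCommGroup P] [Module k P]
    [AddCommGroup Q] [Module k Q] [AddCommGroup R] [Module k R]
    (g₂ : Q →ₗ[k] R) (g₁ : P →ₗ[k] Q) :
    map (LinearMap.id : M →ₗ[k] M) (g₂ ∘ₗ g₁) =
      map LinearMap.id g₂ ∘ₗ map LinearMap.id g₁ := by
  rw [← TensorProduct.map_comp, LinearMap.id_comp]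

lemma map_comp_id {M P Q R : Type*} [AddCommGroup M] [Module k M] [AddCommGroup P] [Module k P]
    [AddCommGroup Q] [Module k Q] [AddCommGroup R] [Module k R]
    (g₂ : Q →ₗ[k] R) (g₁ : P →ₗ[k] Q) :
    map (g₂ ∘ₗ g₁) (LinearMap.id : M →ₗ[k] M) =
      map g₂ LinearMap.id ∘ₗ map g₁ LinearMap.id := by
  rw [← TensorProduct.map_comp, LinearMap.id_comp]

lemma map_comp_left {M N P Q R : Type*} [AddCommGroup M] [Module k M] [AddCommGroup N]
    [Module k N] [AddCommGroup P] [Module k P] [AddCommGroup Q] [Module k Q]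
    [AddCommGroup R] [Module k R]
    (f : M →ₗ[k] N) (g₂ : Q →ₗ[k] R) (g₁ : P →ₗ[k] Q) :
    map f (g₂ ∘ₗ g₁) = map LinearMap.id g₂ ∘ₗ map f g₁ := by
  rw [← TensorProduct.map_comp, LinearMap.id_comp]

lemma map_comp_left' {M N P Q R : Type*} [AddCommGroup M] [Module k M] [AddCommGroup N]
    [Module k N] [AddCommGroup P] [Module k P] [AddCommGroup Q] [Module k Q]
    [AddCommGroup R] [Module k R]
    (f : M →ₗ[k] N) (g₂ : Q →ₗ[k] R) (g₁ : P →ₗ[k] Q) :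
    map f (g₂ ∘ₗ g₁) = map f g₂ ∘ₗ map LinearMap.id g₁ := by
  rw [← TensorProduct.map_comp, LinearMap.comp_id]

lemma map_comp_right {M N P Q R : Type*} [AddCommGroup M] [Module k M] [AddCommGroup N]
    [Module k N] [AddCommGroup P] [Module k P] [AddCommGroup Q] [Module k Q]
    [AddCommGroup R] [Module k R]
    (f : M →ₗ[k] N) (g₂ : Q →ₗ[k] R) (g₁ : P →ₗ[k] Q) :
    map (g₂ ∘ₗ g₁) f = map g₂ f ∘ₗ map g₁ LinearMap.id := by
  rw [← TensorProduct.map_comp, LinearMap.comp_id]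

lemma map_comp_right' {M N P Q R : Type*} [AddCommGroup M] [Module k M] [AddCommGroup N]
    [Module k N] [AddCommGroup P] [Module k P] [AddCommGroup Q] [Module k Q]
    [AddCommGroup R] [Module k R]
    (f : M →ₗ[k] N) (g₂ : Q →ₗ[k] R) (g₁ : P →ₗ[k] Q) :
    map (g₂ ∘ₗ g₁) f = map g₂ LinearMap.id ∘ₗ map g₁ f := by
  rw [← TensorProduct.map_comp, LinearMap.id_comp]

end Structural

section DhatCounit

variable (H : HopfSuperalgebra k A)

/-- `Σ ε(a₁) a₂` extractor -/
noncomputable def Lc : A ⊗[k] A →ₗ[k] A :=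
  (TensorProduct.lid k A).toLinearMap ∘ₗ map H.counit LinearMap.id

/-- `Σ a₁ ε(a₂)` extractor -/
noncomputable def Rc : A ⊗[k] A →ₗ[k] A :=
  (TensorProduct.rid k A).toLinearMap ∘ₗ map LinearMap.id H.counit

lemma Lc_comul (a : A) : H.Lc (H.comul a) = a := by
  simpa [Lc] using H.counit_comul a

lemma Rc_comul (a : A) : H.Rc (H.comul a) = a := by
  simpa [Rc] using H.comul_counit a

lemma eps_term_left :
    (TensorProduct.lid k (A ⊗[k] A)).toLinearMap ∘ₗ map H.epsHat LinearMap.id ∘ₗ tttA k A =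
      map H.Lc H.Lc := by
  apply TensorProduct.ext_fourfold'
  intro a b c d
  simp only [LinearMap.comp_apply, tttA_tmul, TensorProduct.map_tmul, epsHat_tmul,
    LinearMap.id_apply, LinearEquiv.coe_coe, TensorProduct.lid_tmul, Lc,
    TensorProduct.smul_tmul']
  rw [TensorProduct.tmul_smul, TensorProduct.smul_tmul', smul_smul, mul_comm]

lemma eps_term_right :
    (TensorProduct.rid k (A ⊗[k] A)).toLinearMap ∘ₗ map LinearMap.id H.epsHat ∘ₗ tttA k A =
      map H.Rc H.Rc := by
  apply TensorProduct.ext_fourfold'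
  intro a b c d
  simp only [LinearMap.comp_apply, tttA_tmul, TensorProduct.map_tmul, epsHat_tmul,
    LinearMap.id_apply, LinearEquiv.coe_coe, TensorProduct.rid_tmul, Rc,
    TensorProduct.smul_tmul']
  rw [TensorProduct.tmul_smul, TensorProduct.smul_tmul', smul_smul, mul_comm]

lemma Lc_map_id_p (i : ZMod 2) (y : A ⊗[k] A) :
    H.Lc ((map LinearMap.id (H.p i)) y) = H.p i (H.Lc y) := by
  induction y with
  | zero => simp
  | tmul x1 x2 => simp [Lc]
  | add y z hy hz => simp only [map_add, hy, hz]

lemma Lc_Uc (i : ZMod 2) (a : A) : H.Lc (H.Uc i a) = H.p i a := by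
  rw [Uc, LinearMap.comp_apply, Lc_map_id_p, Lc_comul]

lemma Lc_Vc0 (b : A) : H.Lc (H.Vc 0 b) = b := by
  have key : ∀ y : A ⊗[k] A, H.Lc ((map (H.p 0) LinearMap.id) y) = H.Lc y := by
    intro y
    induction y with
    | zero => simp
    | tmul x1 x2 => simp [Lc, counit_p0]
    | add y z hy hz => simp only [map_add, hy, hz]
  rw [Vc, LinearMap.comp_apply, key, Lc_comul]

lemma Lc_Vc1 (b : A) : H.Lc (H.Vc 1 b) = 0 := by
  have key : ∀ y : A ⊗[k] A, H.Lc ((map (H.p 1) LinearMap.id) y) = 0 := by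
    intro y
    induction y with
    | zero => simp
    | tmul x1 x2 => simp [Lc, counit_p1]
    | add y z hy hz => simp only [map_add, hy, hz, add_zero]
  rw [Vc, LinearMap.comp_apply, key]

lemma Rc_map_p_id (j : ZMod 2) (y : A ⊗[k] A) :
    H.Rc ((map (H.p j) LinearMap.id) y) = H.p j (H.Rc y) := by
  induction y with
  | zero => simp
  | tmul x1 x2 => simp [Rc]
  | add y z hy hz => simp only [map_add, hy, hz]

lemma Rc_Vc (j : ZMod 2) (b : A) : H.Rc (H.Vc j b) = H.p j b := by
  rw [Vc, LinearMap.comp_apply, Rc_map_p_id, Rc_comul]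

lemma Rc_Uc0 (a : A) : H.Rc (H.Uc 0 a) = a := by
  have key : ∀ y : A ⊗[k] A, H.Rc ((map LinearMap.id (H.p 0)) y) = H.Rc y := by
    intro y
    induction y with
    | zero => simp
    | tmul x1 x2 => simp [Rc, counit_p0]
    | add y z hy hz => simp only [map_add, hy, hz]
  rw [Uc, LinearMap.comp_apply, key, Rc_comul]

lemma Rc_Uc1 (a : A) : H.Rc (H.Uc 1 a) = 0 := by
  have key : ∀ y : A ⊗[k] A, H.Rc ((map LinearMap.id (H.p 1)) y) = 0 := by
    intro y
    induction y with
    | zero => simp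
    | tmul x1 x2 => simp [Rc, counit_p1]
    | add y z hy hz => simp only [map_add, hy, hz, add_zero]
  rw [Uc, LinearMap.comp_apply, key]

lemma Dhat_counit_left (x : A ⊗[k] A) :
    (TensorProduct.lid k (A ⊗[k] A)) ((map H.epsHat LinearMap.id) (H.Dhat x)) = x := by
  have hmap : (TensorProduct.lid k (A ⊗[k] A)).toLinearMap ∘ₗ
      map H.epsHat LinearMap.id ∘ₗ H.Dhat = LinearMap.id := by
    apply TensorProduct.ext'
    intro a b
    simp only [LinearMap.comp_apply, LinearMap.id_apply]
    have hterm : ∀ i j : ZMod 2,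
        (TensorProduct.lid k (A ⊗[k] A)).toLinearMap
          ((map H.epsHat LinearMap.id) (sg k i j •
            tttA k A ((map (H.Uc i) (H.Vc j)) (a ⊗ₜ b)))) =
        sg k i j • ((H.Lc (H.Uc i a)) ⊗ₜ[k] (H.Lc (H.Vc j b))) := by
      intro i j
      rw [map_smul, map_smul]
      congr 1
      have := LinearMap.congr_fun (H.eps_term_left) ((map (H.Uc i) (H.Vc j)) (a ⊗ₜ b))
      simp only [LinearMap.comp_apply] at this
      rw [this]
      simp
    have expand : (TensorProduct.lid k (A ⊗[k] A)).toLinearMap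
          ((map H.epsHat LinearMap.id) (H.Dhat (a ⊗ₜ b)))
        = ∑ i : ZMod 2, ∑ j : ZMod 2,
            sg k i j • ((H.Lc (H.Uc i a)) ⊗ₜ[k] (H.Lc (H.Vc j b))) := by
      rw [Dhat_apply]
      simp only [map_sum]
      exact Finset.sum_congr rfl fun i _ => Finset.sum_congr rfl fun j _ => hterm i j
    rw [expand]
    rw [sumZ2]
    rw [sumZ2 (fun j => sg k 0 j • (H.Lc (H.Uc 0 a) ⊗ₜ[k] H.Lc (H.Vc j b)))]
    rw [sumZ2 (fun j => sg k 1 j • (H.Lc (H.Uc 1 a) ⊗ₜ[k] H.Lc (H.Vc j b)))]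
    rw [Lc_Vc0, Lc_Vc1, Lc_Uc, Lc_Uc, sg_zero_right, sg_zero_right]
    simp [← TensorProduct.add_tmul, p_add_apply]
  have := LinearMap.congr_fun hmap x
  simpa using this

lemma Dhat_counit_right (x : A ⊗[k] A) :
    (TensorProduct.rid k (A ⊗[k] A)) ((map LinearMap.id H.epsHat) (H.Dhat x)) = x := by
  have hmap : (TensorProduct.rid k (A ⊗[k] A)).toLinearMap ∘ₗ
      map LinearMap.id H.epsHat ∘ₗ H.Dhat = LinearMap.id := by
    apply TensorProduct.ext'
    intro a b
    simp only [LinearMap.comp_apply, LinearMap.id_apply]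
    have hterm : ∀ i j : ZMod 2,
        (TensorProduct.rid k (A ⊗[k] A)).toLinearMap
          ((map LinearMap.id H.epsHat) (sg k i j •
            tttA k A ((map (H.Uc i) (H.Vc j)) (a ⊗ₜ b)))) =
        sg k i j • ((H.Rc (H.Uc i a)) ⊗ₜ[k] (H.Rc (H.Vc j b))) := by
      intro i j
      rw [map_smul, map_smul]
      congr 1
      have := LinearMap.congr_fun (H.eps_term_right) ((map (H.Uc i) (H.Vc j)) (a ⊗ₜ b))
      simp only [LinearMap.comp_apply] at this
      rw [this]
      simp
    have expand : (TensorProduct.rid k (A ⊗[k] A)).toLinearMap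
          ((map LinearMap.id H.epsHat) (H.Dhat (a ⊗ₜ b)))
        = ∑ i : ZMod 2, ∑ j : ZMod 2,
            sg k i j • ((H.Rc (H.Uc i a)) ⊗ₜ[k] (H.Rc (H.Vc j b))) := by
      rw [Dhat_apply]
      simp only [map_sum]
      exact Finset.sum_congr rfl fun i _ => Finset.sum_congr rfl fun j _ => hterm i j
    rw [expand]
    rw [sumZ2]
    rw [sumZ2 (fun j => sg k 0 j • (H.Rc (H.Uc 0 a) ⊗ₜ[k] H.Rc (H.Vc j b)))]
    rw [sumZ2 (fun j => sg k 1 j • (H.Rc (H.Uc 1 a) ⊗ₜ[k] H.Rc (H.Vc j b)))]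
    rw [Rc_Uc0, Rc_Uc1, Rc_Vc, Rc_Vc, sg_zero_left, sg_zero_left]
    simp [← TensorProduct.tmul_add, p_add_apply]
  have := LinearMap.congr_fun hmap x
  simpa using this

end DhatCounit

end HopfSuperalgebra

namespace HopfSuperalgebra

variable {k A : Type*} [CommRing k] [AddCommGroup A] [Module k A]

section Coassoc

variable (H : HopfSuperalgebra k A)

/-- projection on the inner two factors of `A ⊗ (A ⊗ A)` -/
noncomputable def Pa (α β : ZMod 2) : A ⊗[k] (A ⊗[k] A) →ₗ[k] A ⊗[k] (A ⊗[k] A) :=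
  map LinearMap.id (map (H.p α) (H.p β))

/-- projection on the outer two factors of `(A ⊗ A) ⊗ A` -/
noncomputable def Pb (u v : ZMod 2) : (A ⊗[k] A) ⊗[k] A →ₗ[k] (A ⊗[k] A) ⊗[k] A :=
  map (map (H.p u) (H.p v)) LinearMap.id

/-- the double comultiplication `A → A ⊗ (A ⊗ A)` -/
noncomputable def Wa : A →ₗ[k] A ⊗[k] (A ⊗[k] A) :=
  map LinearMap.id H.comul ∘ₗ H.comul

/-- the double comultiplication `A → (A ⊗ A) ⊗ A` -/
noncomputable def Wb : A →ₗ[k] (A ⊗[k] A) ⊗[k] A :=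
  map H.comul LinearMap.id ∘ₗ H.comul

variable (k A) in
/-- the six-fold shuffle -/
noncomputable def Xi : (A ⊗[k] (A ⊗[k] A)) ⊗[k] ((A ⊗[k] A) ⊗[k] A) →ₗ[k]
    (A ⊗[k] A) ⊗[k] ((A ⊗[k] A) ⊗[k] (A ⊗[k] A)) :=
  map LinearMap.id (tttA k A) ∘ₗ
    (tensorTensorTensorComm k A (A ⊗[k] A) A (A ⊗[k] A)).toLinearMap ∘ₗ
      map LinearMap.id (TensorProduct.assoc k A A A).toLinearMap

/-- the normal form terms in the coassociativity computation -/
noncomputable def Mq (α β u v : ZMod 2) : A ⊗[k] A →ₗ[k]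
    (A ⊗[k] A) ⊗[k] ((A ⊗[k] A) ⊗[k] (A ⊗[k] A)) :=
  Xi k A ∘ₗ map (H.Pa α β) (H.Pb u v) ∘ₗ map H.Wa H.Wb

lemma R1 : map LinearMap.id H.Dhat ∘ₗ tttA k A =
    ∑ m : ZMod 2, ∑ n : ZMod 2, sg k m n •
      (map LinearMap.id (tttA k A) ∘ₗ
        (tensorTensorTensorComm k A (A ⊗[k] A) A (A ⊗[k] A)).toLinearMap ∘ₗ
          map (map LinearMap.id (H.Uc m)) (map LinearMap.id (H.Vc n))) := by
  apply TensorProduct.ext_fourfold'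
  intro q1 q2 r1 r2
  simp only [LinearMap.comp_apply, LinearMap.sum_apply, LinearMap.smul_apply, tttA_tmul,
    TensorProduct.map_tmul, LinearMap.id_apply, Dhat_apply, TensorProduct.tmul_sum,
    TensorProduct.tmul_smul, LinearEquiv.coe_coe, TensorProduct.tensorTensorTensorComm_tmul]

lemma L1 : map H.Dhat LinearMap.id ∘ₗ tttA k A =
    ∑ m : ZMod 2, ∑ n : ZMod 2, sg k m n •
      (map (tttA k A) LinearMap.id ∘ₗ
        (tensorTensorTensorComm k (A ⊗[k] A) A (A ⊗[k] A) A).toLinearMap ∘ₗ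
          map (map (H.Uc m) LinearMap.id) (map (H.Vc n) LinearMap.id)) := by
  apply TensorProduct.ext_fourfold'
  intro q1 q2 r1 r2
  simp only [LinearMap.comp_apply, LinearMap.sum_apply, LinearMap.smul_apply, tttA_tmul,
    TensorProduct.map_tmul, LinearMap.id_apply, Dhat_apply, TensorProduct.sum_tmul,
    TensorProduct.smul_tmul', LinearEquiv.coe_coe, TensorProduct.tensorTensorTensorComm_tmul]

lemma UcUc (i m : ZMod 2) :
    map LinearMap.id (H.Uc m) ∘ₗ H.Uc i = H.Pa (i + m) m ∘ₗ H.Wa := by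
  have h1 : H.Uc m ∘ₗ H.p i = map (H.p (i + m)) (H.p m) ∘ₗ H.comul := by
    rw [Uc, LinearMap.comp_assoc]; exact gradeA H i m
  calc map LinearMap.id (H.Uc m) ∘ₗ H.Uc i
      = (map LinearMap.id (H.Uc m) ∘ₗ map LinearMap.id (H.p i)) ∘ₗ H.comul := by
        rw [show H.Uc i = map LinearMap.id (H.p i) ∘ₗ H.comul from rfl,
          ← LinearMap.comp_assoc]
    _ = map LinearMap.id (H.Uc m ∘ₗ H.p i) ∘ₗ H.comul := by rw [← map_id_comp]
    _ = map LinearMap.id (map (H.p (i + m)) (H.p m) ∘ₗ H.comul) ∘ₗ H.comul := by rw [h1]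
    _ = H.Pa (i + m) m ∘ₗ H.Wa := by
        rw [map_id_comp, Pa, Wa, LinearMap.comp_assoc]

lemma VcVc (j n : ZMod 2) :
    map LinearMap.id (H.Vc n) ∘ₗ H.Vc j =
      (TensorProduct.assoc k A A A).toLinearMap ∘ₗ H.Pb j n ∘ₗ H.Wb := by
  calc map LinearMap.id (H.Vc n) ∘ₗ H.Vc j
      = (map LinearMap.id (H.Vc n) ∘ₗ map (H.p j) LinearMap.id) ∘ₗ H.comul := by
        rw [show H.Vc j = map (H.p j) LinearMap.id ∘ₗ H.comul from rfl,
          ← LinearMap.comp_assoc]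
    _ = map (H.p j) (H.Vc n) ∘ₗ H.comul := by
        rw [← TensorProduct.map_comp, LinearMap.id_comp, LinearMap.comp_id]
    _ = (map (H.p j) (map (H.p n) LinearMap.id) ∘ₗ map LinearMap.id H.comul) ∘ₗ H.comul := by
        rw [Vc, map_comp_left' (H.p j) (map (H.p n) LinearMap.id) H.comul]
    _ = map (H.p j) (map (H.p n) LinearMap.id) ∘ₗ
          ((TensorProduct.assoc k A A A).toLinearMap ∘ₗ map H.comul LinearMap.id ∘ₗ H.comul) := by
        rw [LinearMap.comp_assoc, coassoc_map]
    _ = (map (H.p j) (map (H.p n) LinearMap.id) ∘ₗ (TensorProduct.assoc k A A A).toLinearMap) ∘ₗ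
          map H.comul LinearMap.id ∘ₗ H.comul := by
        rw [← LinearMap.comp_assoc]
    _ = (TensorProduct.assoc k A A A).toLinearMap ∘ₗ H.Pb j n ∘ₗ H.Wb := by
        rw [TensorProduct.map_map_comp_assoc_eq, Pb, Wb, LinearMap.comp_assoc]

lemma UcUc' (i m : ZMod 2) :
    map (H.Uc m) LinearMap.id ∘ₗ H.Uc i =
      (TensorProduct.assoc k A A A).symm.toLinearMap ∘ₗ H.Pa m i ∘ₗ H.Wa := by
  calc map (H.Uc m) LinearMap.id ∘ₗ H.Uc i
      = (map (H.Uc m) LinearMap.id ∘ₗ map LinearMap.id (H.p i)) ∘ₗ H.comul := by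
        rw [show H.Uc i = map LinearMap.id (H.p i) ∘ₗ H.comul from rfl,
          ← LinearMap.comp_assoc]
    _ = map (H.Uc m) (H.p i) ∘ₗ H.comul := by
        rw [← TensorProduct.map_comp, LinearMap.id_comp, LinearMap.comp_id]
    _ = (map (map LinearMap.id (H.p m)) (H.p i) ∘ₗ map H.comul LinearMap.id) ∘ₗ H.comul := by
        rw [Uc, map_comp_right]
    _ = map (map LinearMap.id (H.p m)) (H.p i) ∘ₗ
          ((TensorProduct.assoc k A A A).symm.toLinearMap ∘ₗ
            map LinearMap.id H.comul ∘ₗ H.comul) := by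
        rw [LinearMap.comp_assoc, coassoc_map']
    _ = (map (map LinearMap.id (H.p m)) (H.p i) ∘ₗ
          (TensorProduct.assoc k A A A).symm.toLinearMap) ∘ₗ
            map LinearMap.id H.comul ∘ₗ H.comul := by
        rw [← LinearMap.comp_assoc]
    _ = (TensorProduct.assoc k A A A).symm.toLinearMap ∘ₗ H.Pa m i ∘ₗ H.Wa := by
        rw [TensorProduct.map_map_comp_assoc_symm_eq, Pa, Wa, LinearMap.comp_assoc]

lemma VcVc' (j n : ZMod 2) :
    map (H.Vc n) LinearMap.id ∘ₗ H.Vc j = H.Pb n (j + n) ∘ₗ H.Wb := by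
  have h1 : H.Vc n ∘ₗ H.p j = map (H.p n) (H.p (j + n)) ∘ₗ H.comul := by
    rw [Vc, LinearMap.comp_assoc]; exact gradeB H j n
  calc map (H.Vc n) LinearMap.id ∘ₗ H.Vc j
      = (map (H.Vc n) LinearMap.id ∘ₗ map (H.p j) LinearMap.id) ∘ₗ H.comul := by
        rw [show H.Vc j = map (H.p j) LinearMap.id ∘ₗ H.comul from rfl,
          ← LinearMap.comp_assoc]
    _ = map (H.Vc n ∘ₗ H.p j) LinearMap.id ∘ₗ H.comul := by rw [← map_comp_id]
    _ = map (map (H.p n) (H.p (j + n)) ∘ₗ H.comul) LinearMap.id ∘ₗ H.comul := by rw [h1]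
    _ = H.Pb n (j + n) ∘ₗ H.Wb := by
        rw [map_comp_id, Pb, Wb, LinearMap.comp_assoc]

variable (k A) in
lemma Xi_eq :
    (TensorProduct.assoc k (A ⊗[k] A) (A ⊗[k] A) (A ⊗[k] A)).toLinearMap ∘ₗ
      map (tttA k A) LinearMap.id ∘ₗ
        (tensorTensorTensorComm k (A ⊗[k] A) A (A ⊗[k] A) A).toLinearMap ∘ₗ
          map (TensorProduct.assoc k A A A).symm.toLinearMap LinearMap.id = Xi k A := by
  apply TensorProduct.ext_fourfold'
  intro w x y z
  induction x with
  | zero => simp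
  | tmul a2 a3 =>
      induction y with
      | zero => simp
      | tmul b1 b2 => simp [Xi, tttA]
      | add u v hu hv =>
          simp only [TensorProduct.tmul_add, TensorProduct.add_tmul, map_add, hu, hv]
  | add u v hu hv =>
      simp only [TensorProduct.tmul_add, TensorProduct.add_tmul, map_add, hu, hv]

lemma TermR (i j : ZMod 2) :
    map LinearMap.id H.Dhat ∘ₗ (tttA k A ∘ₗ map (H.Uc i) (H.Vc j)) =
      ∑ m : ZMod 2, ∑ n : ZMod 2, sg k m n • H.Mq (i + m) m j n := by
  rw [← LinearMap.comp_assoc, R1]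
  apply LinearMap.ext; intro x
  simp only [LinearMap.sum_apply, LinearMap.smul_apply, LinearMap.comp_apply]
  refine Finset.sum_congr rfl fun m _ => Finset.sum_congr rfl fun n _ => ?_
  congr 1
  have key : (map LinearMap.id (tttA k A) ∘ₗ
      (tensorTensorTensorComm k A (A ⊗[k] A) A (A ⊗[k] A)).toLinearMap ∘ₗ
        map (map LinearMap.id (H.Uc m)) (map LinearMap.id (H.Vc n))) ∘ₗ
          map (H.Uc i) (H.Vc j) = H.Mq (i + m) m j n := by
    rw [LinearMap.comp_assoc, LinearMap.comp_assoc, ← TensorProduct.map_comp,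
      UcUc, VcVc]
    rw [map_comp_left (H.Pa (i + m) m ∘ₗ H.Wa) (TensorProduct.assoc k A A A).toLinearMap
      (H.Pb j n ∘ₗ H.Wb)]
    rw [TensorProduct.map_comp]
    simp only [Mq, Xi, LinearMap.comp_assoc]
  simpa using LinearMap.congr_fun key x

lemma TermL (i j : ZMod 2) :
    (TensorProduct.assoc k (A ⊗[k] A) (A ⊗[k] A) (A ⊗[k] A)).toLinearMap ∘ₗ
      map H.Dhat LinearMap.id ∘ₗ (tttA k A ∘ₗ map (H.Uc i) (H.Vc j)) =
        ∑ m : ZMod 2, ∑ n : ZMod 2, sg k m n • H.Mq m i n (j + n) := by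
  have step : map H.Dhat LinearMap.id ∘ₗ (tttA k A ∘ₗ map (H.Uc i) (H.Vc j)) =
      (∑ m : ZMod 2, ∑ n : ZMod 2, sg k m n •
        (map (tttA k A) LinearMap.id ∘ₗ
          (tensorTensorTensorComm k (A ⊗[k] A) A (A ⊗[k] A) A).toLinearMap ∘ₗ
            map (map (H.Uc m) LinearMap.id) (map (H.Vc n) LinearMap.id))) ∘ₗ
              map (H.Uc i) (H.Vc j) := by
    rw [← LinearMap.comp_assoc, L1]
  rw [step]
  apply LinearMap.ext; intro x
  simp only [LinearMap.sum_apply, LinearMap.smul_apply, LinearMap.comp_apply, map_sum, map_smul]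
  refine Finset.sum_congr rfl fun m _ => Finset.sum_congr rfl fun n _ => ?_
  congr 1
  have key : (TensorProduct.assoc k (A ⊗[k] A) (A ⊗[k] A) (A ⊗[k] A)).toLinearMap ∘ₗ
      (map (tttA k A) LinearMap.id ∘ₗ
        (tensorTensorTensorComm k (A ⊗[k] A) A (A ⊗[k] A) A).toLinearMap ∘ₗ
          map (map (H.Uc m) LinearMap.id) (map (H.Vc n) LinearMap.id)) ∘ₗ
            map (H.Uc i) (H.Vc j) = H.Mq m i n (j + n) := by
    rw [LinearMap.comp_assoc, LinearMap.comp_assoc, ← TensorProduct.map_comp,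
      UcUc', VcVc']
    rw [map_comp_right' (H.Pb n (j + n) ∘ₗ H.Wb)
      (TensorProduct.assoc k A A A).symm.toLinearMap (H.Pa m i ∘ₗ H.Wa)]
    rw [TensorProduct.map_comp]
    rw [Mq, ← Xi_eq k A]
    simp only [LinearMap.comp_assoc]
  simpa using LinearMap.congr_fun key x

lemma sum_magic {M : Type*} [AddCommGroup M] [Module k M]
    (F : ZMod 2 → ZMod 2 → ZMod 2 → ZMod 2 → M) :
    (∑ i : ZMod 2, ∑ j : ZMod 2, sg k i j •
      ∑ m : ZMod 2, ∑ n : ZMod 2, sg k m n • F m i n (j + n)) =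
    (∑ i : ZMod 2, ∑ j : ZMod 2, sg k i j •
      ∑ m : ZMod 2, ∑ n : ZMod 2, sg k m n • F (i + m) m j n) := by
  have sg00 : sg k 0 0 = 1 := sg_zero_left 0
  have sg01 : sg k 0 1 = 1 := sg_zero_left 1
  have sg10 : sg k 1 0 = 1 := sg_zero_right 1
  have sg11 : sg k 1 1 = -1 := by
    simp [sg, ZMod.val_one]
  simp only [sumZ2, sg00, sg01, sg10, sg11, smul_add, smul_smul, one_smul, one_mul,
    mul_one, neg_one_mul, neg_smul, neg_neg, neg_one_smul,
    show (0 + 0 : ZMod 2) = 0 by decide, show (0 + 1 : ZMod 2) = 1 by decide,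
    show (1 + 0 : ZMod 2) = 1 by decide, show (1 + 1 : ZMod 2) = 0 by decide]
  abel

lemma Dhat_coassoc (x : A ⊗[k] A) :
    (TensorProduct.assoc k (A ⊗[k] A) (A ⊗[k] A) (A ⊗[k] A))
      ((map H.Dhat LinearMap.id) (H.Dhat x)) =
    (map LinearMap.id H.Dhat) (H.Dhat x) := by
  have hL : (TensorProduct.assoc k (A ⊗[k] A) (A ⊗[k] A) (A ⊗[k] A))
      ((map H.Dhat LinearMap.id) (H.Dhat x)) =
      ∑ i : ZMod 2, ∑ j : ZMod 2, sg k i j •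
        ∑ m : ZMod 2, ∑ n : ZMod 2, sg k m n • H.Mq m i n (j + n) x := by
    rw [Dhat_apply]
    simp only [map_sum, map_smul]
    refine Finset.sum_congr rfl fun i _ => Finset.sum_congr rfl fun j _ => ?_
    congr 1
    have := LinearMap.congr_fun (H.TermL i j) x
    simp only [LinearMap.comp_apply, LinearMap.sum_apply, LinearMap.smul_apply,
      LinearEquiv.coe_coe] at this
    rw [this]
  have hR : (map LinearMap.id H.Dhat) (H.Dhat x) =
      ∑ i : ZMod 2, ∑ j : ZMod 2, sg k i j •
        ∑ m : ZMod 2, ∑ n : ZMod 2, sg k m n • H.Mq (i + m) m j n x := by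
    rw [Dhat_apply]
    simp only [map_sum, map_smul]
    refine Finset.sum_congr rfl fun i _ => Finset.sum_congr rfl fun j _ => ?_
    congr 1
    have := LinearMap.congr_fun (H.TermR i j) x
    simp only [LinearMap.comp_apply, LinearMap.sum_apply, LinearMap.smul_apply,
      LinearEquiv.coe_coe] at this
    rw [this]
  rw [hL, hR]
  exact sum_magic (fun α β u v => H.Mq α β u v x)

end Coassoc

end HopfSuperalgebra

namespace HopfSuperalgebra

variable {k A : Type*} [CommRing k] [AddCommGroup A] [Module k A]

section Mult

variable (H : HopfSuperalgebra k A)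

lemma hthm_eq (u v : A ⊗[k] A) :
    (TensorProduct.homTensorHomMap (RingHom.id k) A A A A) ((map H.mul H.mul) u) v =
      (map H.muM H.muM) (tttA k A (u ⊗ₜ v)) := by
  induction u with
  | zero => simp
  | tmul u1 u2 =>
      induction v with
      | zero => simp
      | tmul v1 v2 => simp [muM, tttA]
      | add y z hy hz => simp only [TensorProduct.tmul_add, map_add, hy, hz]
  | add y z hy hz => simp only [TensorProduct.add_tmul, map_add, LinearMap.add_apply, hy, hz]

lemma comul_mul_map : H.comul ∘ₗ H.muM = map H.muM H.muM ∘ₗ H.Dhat := by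
  apply TensorProduct.ext'; intro a b
  simp only [LinearMap.comp_apply, muM_tmul]
  rw [H.comul_mul a b, Dhat_apply]
  simp only [map_sum, map_smul]
  refine Finset.sum_congr rfl fun i _ => Finset.sum_congr rfl fun j _ => ?_
  rw [← Int.cast_smul_eq_zsmul k]
  congr 1
  rw [hthm_eq]
  simp [Uc, Vc]

lemma UV_split (i j : ZMod 2) :
    map (H.Uc i) (H.Vc j) =
      map (map LinearMap.id (H.p i)) (map (H.p j) LinearMap.id) ∘ₗ map H.comul H.comul := by
  rw [Uc, Vc, TensorProduct.map_comp]

lemma cv2_comp_mu (u v : A →ₗ[k] A) :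
    H.cv H.Dhat (u ∘ₗ H.muM) (v ∘ₗ H.muM) = (H.cv H.comul u v) ∘ₗ H.muM := by
  calc H.cv H.Dhat (u ∘ₗ H.muM) (v ∘ₗ H.muM)
      = H.muM ∘ₗ (map u v ∘ₗ map H.muM H.muM) ∘ₗ H.Dhat := by
        rw [cv, TensorProduct.map_comp]
    _ = H.muM ∘ₗ map u v ∘ₗ (map H.muM H.muM ∘ₗ H.Dhat) := by
        simp only [LinearMap.comp_assoc]
    _ = H.muM ∘ₗ map u v ∘ₗ (H.comul ∘ₗ H.muM) := by rw [← comul_mul_map]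
    _ = (H.cv H.comul u v) ∘ₗ H.muM := by rw [cv]; simp only [LinearMap.comp_assoc]

lemma cu_mu : H.cuM ∘ₗ H.muM = H.epsHat.smulRight H.one := by
  apply TensorProduct.ext'; intro a b
  simp [cuM, H.counit_mul, epsHat]

lemma cv2_FK : H.cv H.Dhat (H.antipode ∘ₗ H.muM) H.muM = H.epsHat.smulRight H.one := by
  have h := H.cv2_comp_mu H.antipode LinearMap.id
  rw [LinearMap.id_comp] at h
  rw [h, show H.cv H.comul H.antipode LinearMap.id = H.cvA H.antipode LinearMap.id from rfl,
    cvA_s_id, cu_mu]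

lemma cv2_KF : H.cv H.Dhat H.muM (H.antipode ∘ₗ H.muM) = H.epsHat.smulRight H.one := by
  have h := H.cv2_comp_mu LinearMap.id H.antipode
  rw [LinearMap.id_comp] at h
  rw [h, show H.cv H.comul LinearMap.id H.antipode = H.cvA LinearMap.id H.antipode from rfl,
    cvA_id_s, cu_mu]

lemma GK_struct (hsc : H.IsSupercommutative) :
    (∑ i : ZMod 2, ∑ j : ZMod 2, sg k i j •
      (H.muM ∘ₗ map (H.muM ∘ₗ map H.antipode H.antipode) H.muM ∘ₗ tttA k A ∘ₗ
        map (map LinearMap.id (H.p i)) (map (H.p j) LinearMap.id))) =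
    H.muM ∘ₗ map (H.muM ∘ₗ map H.antipode LinearMap.id)
      (H.muM ∘ₗ map H.antipode LinearMap.id) := by
  apply TensorProduct.ext_fourfold'
  intro x1 x2 y1 y2
  simp only [LinearMap.sum_apply, LinearMap.smul_apply, LinearMap.comp_apply,
    TensorProduct.map_tmul, LinearMap.id_apply, tttA_tmul, muM_tmul]
  have hterm : ∀ i j : ZMod 2,
      sg k i j • H.mul (H.mul (H.antipode x1) (H.antipode (H.p j y1)))
        (H.mul (H.p i x2) y2) =
      H.mul (H.mul (H.antipode x1) (H.p i x2))
        (H.mul (H.antipode (H.p j y1)) y2) := by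
    intro i j
    have hS : H.p j (H.antipode (H.p j y1)) = H.antipode (H.p j y1) := by
      rw [p_s, p_p]
    have swap : H.mul (H.antipode (H.p j y1)) (H.p i x2) =
        sg k j i • H.mul (H.p i x2) (H.antipode (H.p j y1)) := by
      conv_lhs => rw [← hS, ← p_p H i x2]
      rw [hsc j i (H.antipode (H.p j y1)) (H.p i x2)]
      rw [← Int.cast_smul_eq_zsmul k, hS, p_p]
      rfl
    calc sg k i j • H.mul (H.mul (H.antipode x1) (H.antipode (H.p j y1)))
          (H.mul (H.p i x2) y2)
        = sg k i j • H.mul (H.antipode x1)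
            (H.mul (H.mul (H.antipode (H.p j y1)) (H.p i x2)) y2) := by
          rw [H.mul_assoc, H.mul_assoc]
      _ = sg k i j • H.mul (H.antipode x1)
            (H.mul (sg k j i • H.mul (H.p i x2) (H.antipode (H.p j y1))) y2) := by
          rw [swap]
      _ = (sg k i j * sg k j i) • H.mul (H.antipode x1)
            (H.mul (H.mul (H.p i x2) (H.antipode (H.p j y1))) y2) := by
          rw [map_smul, LinearMap.smul_apply, map_smul, smul_smul]
      _ = H.mul (H.antipode x1)
            (H.mul (H.mul (H.p i x2) (H.antipode (H.p j y1))) y2) := by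
          rw [sg_mul_sg, one_smul]
      _ = H.mul (H.mul (H.antipode x1) (H.p i x2))
            (H.mul (H.antipode (H.p j y1)) y2) := by
          rw [H.mul_assoc, H.mul_assoc]
  calc (∑ i : ZMod 2, ∑ j : ZMod 2, sg k i j •
        H.mul (H.mul (H.antipode x1) (H.antipode (H.p j y1))) (H.mul (H.p i x2) y2))
      = ∑ i : ZMod 2, ∑ j : ZMod 2,
          H.mul (H.mul (H.antipode x1) (H.p i x2))
            (H.mul (H.antipode (H.p j y1)) y2) := by
        exact Finset.sum_congr rfl fun i _ => Finset.sum_congr rfl fun j _ => hterm i j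
    _ = ∑ i : ZMod 2, H.mul (H.mul (H.antipode x1) (H.p i x2))
          (H.mul (H.antipode y1) y2) := by
        refine Finset.sum_congr rfl fun i _ => ?_
        rw [sumZ2]
        rw [← map_add (H.mul (H.mul (H.antipode x1) (H.p i x2)))]
        rw [← LinearMap.add_apply, ← map_add, ← map_add, p_add_apply]
    _ = H.mul (H.mul (H.antipode x1) x2) (H.mul (H.antipode y1) y2) := by
        rw [sumZ2]
        rw [← LinearMap.add_apply, ← map_add, ← map_add, p_add_apply]


lemma GK (hsc : H.IsSupercommutative) :
    H.cv H.Dhat (H.muM ∘ₗ map H.antipode H.antipode) H.muM =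
      H.epsHat.smulRight H.one := by
  have hfin : H.muM ∘ₗ map (H.muM ∘ₗ map H.antipode LinearMap.id ∘ₗ H.comul)
      (H.muM ∘ₗ map H.antipode LinearMap.id ∘ₗ H.comul) = H.epsHat.smulRight H.one := by
    have hc : H.muM ∘ₗ map H.antipode LinearMap.id ∘ₗ H.comul = H.cuM := H.cvA_s_id
    rw [hc]
    apply TensorProduct.ext'; intro a b
    simp [cuM, epsHat, H.mul_one, TensorProduct.smul_tmul', smul_smul, mul_comm]
  apply LinearMap.ext; intro x
  rw [cv_apply, Dhat_apply]
  simp only [map_sum, map_smul]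
  have expand : ∀ i j : ZMod 2,
      H.muM ((map (H.muM ∘ₗ map H.antipode H.antipode) H.muM)
        (tttA k A ((map (H.Uc i) (H.Vc j)) x))) =
      (H.muM ∘ₗ map (H.muM ∘ₗ map H.antipode H.antipode) H.muM ∘ₗ tttA k A ∘ₗ
        map (map LinearMap.id (H.p i)) (map (H.p j) LinearMap.id))
          ((map H.comul H.comul) x) := by
    intro i j
    rw [UV_split]
    simp only [LinearMap.comp_apply]
  calc (∑ i : ZMod 2, ∑ j : ZMod 2, sg k i j •
        H.muM ((map (H.muM ∘ₗ map H.antipode H.antipode) H.muM)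
          (tttA k A ((map (H.Uc i) (H.Vc j)) x))))
      = (∑ i : ZMod 2, ∑ j : ZMod 2, sg k i j •
          (H.muM ∘ₗ map (H.muM ∘ₗ map H.antipode H.antipode) H.muM ∘ₗ tttA k A ∘ₗ
            map (map LinearMap.id (H.p i)) (map (H.p j) LinearMap.id)))
              ((map H.comul H.comul) x) := by
        simp only [LinearMap.sum_apply, LinearMap.smul_apply]
        exact Finset.sum_congr rfl fun i _ => Finset.sum_congr rfl fun j _ => by
          rw [expand i j]
    _ = (H.muM ∘ₗ map (H.muM ∘ₗ map H.antipode LinearMap.id)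
          (H.muM ∘ₗ map H.antipode LinearMap.id)) ((map H.comul H.comul) x) := by
        rw [← GK_struct H hsc]
    _ = (H.epsHat.smulRight H.one) x := by
        rw [← hfin]
        rw [← LinearMap.comp_apply]
        congr 1
        rw [LinearMap.comp_assoc, ← TensorProduct.map_comp]
        simp only [LinearMap.comp_assoc]

lemma s_mul_map (hsc : H.IsSupercommutative) :
    H.muM ∘ₗ map H.antipode H.antipode = H.antipode ∘ₗ H.muM := by
  have u1 : H.cv H.Dhat (H.muM ∘ₗ map H.antipode H.antipode)
      (H.epsHat.smulRight H.one) = H.muM ∘ₗ map H.antipode H.antipode :=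
    H.cv_unit_right H.Dhat H.epsHat H.Dhat_counit_right _
  have u2 : H.cv H.Dhat (H.epsHat.smulRight H.one) (H.antipode ∘ₗ H.muM) =
      H.antipode ∘ₗ H.muM :=
    H.cv_unit_left H.Dhat H.epsHat H.Dhat_counit_left _
  calc H.muM ∘ₗ map H.antipode H.antipode
      = H.cv H.Dhat (H.muM ∘ₗ map H.antipode H.antipode)
          (H.cv H.Dhat H.muM (H.antipode ∘ₗ H.muM)) := by rw [cv2_KF, u1]
    _ = H.cv H.Dhat (H.cv H.Dhat (H.muM ∘ₗ map H.antipode H.antipode) H.muM)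
          (H.antipode ∘ₗ H.muM) := by
        rw [H.cv_assoc H.Dhat H.Dhat_coassoc]
    _ = H.antipode ∘ₗ H.muM := by rw [GK H hsc, u2]

lemma s_cu : H.antipode ∘ₗ H.cuM = H.cuM := by
  apply LinearMap.ext; intro a
  simp [cuM, s_one]

lemma s_involution (hsc : H.IsSupercommutative) :
    ∀ a : A, H.antipode (H.antipode a) = a := by
  have hss : H.cvA H.antipode (H.antipode ∘ₗ H.antipode) = H.cuM := by
    have hmap : map H.antipode (H.antipode ∘ₗ H.antipode) =
        map H.antipode H.antipode ∘ₗ map LinearMap.id H.antipode := by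
      rw [← TensorProduct.map_comp, LinearMap.comp_id]
    calc H.cvA H.antipode (H.antipode ∘ₗ H.antipode)
        = H.muM ∘ₗ (map H.antipode H.antipode ∘ₗ map LinearMap.id H.antipode) ∘ₗ H.comul := by
          rw [cvA, cv, hmap]
      _ = (H.muM ∘ₗ map H.antipode H.antipode) ∘ₗ map LinearMap.id H.antipode ∘ₗ H.comul := by
          simp only [LinearMap.comp_assoc]
      _ = H.antipode ∘ₗ (H.muM ∘ₗ map LinearMap.id H.antipode ∘ₗ H.comul) := by
          rw [s_mul_map H hsc]; simp only [LinearMap.comp_assoc]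
      _ = H.antipode ∘ₗ H.cuM := by
          rw [show H.muM ∘ₗ map LinearMap.id H.antipode ∘ₗ H.comul =
            H.cvA LinearMap.id H.antipode from rfl, cvA_id_s]
      _ = H.cuM := s_cu H
  have hmain : H.antipode ∘ₗ H.antipode = LinearMap.id := by
    calc H.antipode ∘ₗ H.antipode
        = H.cvA H.cuM (H.antipode ∘ₗ H.antipode) := (H.cvA_unit_left _).symm
      _ = H.cvA (H.cvA LinearMap.id H.antipode) (H.antipode ∘ₗ H.antipode) := by
          rw [cvA_id_s]
      _ = H.cvA LinearMap.id (H.cvA H.antipode (H.antipode ∘ₗ H.antipode)) :=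
          H.cvA_assoc _ _ _
      _ = H.cvA LinearMap.id H.cuM := by rw [hss]
      _ = LinearMap.id := H.cvA_unit_right _
  intro a
  exact LinearMap.congr_fun hmain a

end Mult

end HopfSuperalgebra

namespace HopfSuperalgebra

variable {k A : Type*} [CommRing k] [AddCommGroup A] [Module k A]

section Boson

variable (H : HopfSuperalgebra k A)

lemma hat_apply (a b : A) :
    H.hatAntipode (a, b) =
      (H.antipode (H.p 0 a) + H.antipode (H.p 1 b),
        -(H.antipode (H.p 1 a)) - H.antipode (H.p 0 b)) := by
  simp [hatAntipode]

lemma hatS_S (hsc : H.IsSupercommutative) (a b : A) :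
    H.hatAntipode (H.hatAntipode (a, b)) =
      (H.p 0 a - H.p 1 a, H.p 0 b - H.p 1 b) := by
  have hs := H.s_involution hsc
  rw [hat_apply, hat_apply]
  have h01 : ∀ c : A, H.p 0 (H.p 1 c) = 0 := p_p_ne H (by decide)
  have h10 : ∀ c : A, H.p 1 (H.p 0 c) = 0 := p_p_ne H (by decide)
  simp only [map_add, map_sub, map_neg, p_s, p_p, h01, h10, map_zero, add_zero,
    zero_add, zero_sub, sub_neg_eq_add, neg_neg, hs, Prod.mk.injEq]
  constructor <;> abel

lemma parity_parity (c : A) :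
    H.p 0 (H.p 0 c - H.p 1 c) - H.p 1 (H.p 0 c - H.p 1 c) = c := by
  have h01 : H.p 0 (H.p 1 c) = 0 := p_p_ne H (by decide) c
  have h10 : H.p 1 (H.p 0 c) = 0 := p_p_ne H (by decide) c
  rw [map_sub, map_sub, p_p, p_p, h01, h10]
  rw [sub_zero, zero_sub, sub_neg_eq_add, p_add_apply]

lemma hatS_four (hsc : H.IsSupercommutative) (x : A × A) :
    H.hatAntipode (H.hatAntipode (H.hatAntipode (H.hatAntipode x))) = x := by
  obtain ⟨a, b⟩ := x
  rw [hatS_S H hsc, hatS_S H hsc, parity_parity, parity_parity]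

end Boson

end HopfSuperalgebra
/-- Let `A` be a super-commutative Hopf superalgebra over a field.  Then the
antipode `s` of `A` is an involution, and consequently the antipode `S` of the
bosonization `Â = A ⋊ kZ₂`, given by
`S(a ⊗ σ^i) = (−1)^{i+|a|} s(a) ⊗ σ^{i+|a|}`, is bijective. -/
theorem stmt19 {k A : Type*} [Field k] [AddCommGroup A] [Module k A]
    (H : HopfSuperalgebra k A) (hsc : H.IsSupercommutative) :
    (∀ a : A, H.antipode (H.antipode a) = a) ∧
      Function.Bijective H.hatAntipode := by
  constructor
  · exact H.s_involution hsc
  · rw [Function.bijective_iff_has_inverse]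
    exact ⟨fun x => H.hatAntipode (H.hatAntipode (H.hatAntipode x)),
      fun x => H.hatS_four hsc (x : A × A) ▸ H.hatS_four hsc x,
      fun x => H.hatS_four hsc x⟩
end
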